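/- arXiv:math/0509378 — 6 statements merged into one kernel-verified Lean document; each statement's English description precedes it below -/
import Mathlib

section
/- The partition poset Π^(2)_7 of partitions of {1,...,7} with all block sizes congruent to 1 mod 2 is not a lattice: the partitions (123)4567 and 1(234)567 have three distinct minimal upper bounds in Π^(2)_7, namely (12345)67, (12346)57, and (12347)56. -/
open Classical Set
noncomputable section

/-- The partition of `Fin m` whose only (possibly) non-singleton block is `B`. -/
def blockSetoid {m : ℕ} (B : Set (Fin m)) : Setoid (Fin m) :=
  ⟨fun x y => x = y ∨ (x ∈ B ∧ y ∈ B), by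
    refine ⟨fun x => Or.inl rfl, ?_, ?_⟩
    · rintro x y (h | h)
      · exact Or.inl h.symm
      · exact Or.inr ⟨h.2, h.1⟩
    · rintro x y z (h1 | h1) (h2 | h2)
      · exact Or.inl (h1.trans h2)
      · subst h1; exact Or.inr h2
      · subst h2; exact Or.inr h1
      · exact Or.inr ⟨h1.1, h2.2⟩⟩

/-- `Π^(k)_m`: partitions of `{1,…,m}` all of whose blocks have size ≡ 1 (mod k). -/
def Pik (k m : ℕ) : Set (Setoid (Fin m)) :=
  {s | ∀ c ∈ s.classes, c.ncard ≡ 1 [MOD k]}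

/-- `I`: partitions with exactly one non-singleton block (the minimal building set of `Π_m`). -/
def BSI (m : ℕ) : Set (Setoid (Fin m)) :=
  {s | ∃ B : Set (Fin m), 2 ≤ B.ncard ∧ s = blockSetoid B}

/-- `G`: partitions with exactly one non-singleton block, of size ≡ 1 (mod k). -/
def BSG (k m : ℕ) : Set (Setoid (Fin m)) :=
  {s | ∃ B : Set (Fin m), 2 ≤ B.ncard ∧ B.ncard ≡ 1 [MOD k] ∧ s = blockSetoid B}

/-- `z` is a minimal upper bound of the set `A` within the subposet `P`. -/
def IsMinUB {L : Type*} [PartialOrder L] (P : Set L) (A : Set L) (z : L) : Prop :=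
  z ∈ P ∧ (∀ a ∈ A, a ≤ z) ∧ ∀ w ∈ P, (∀ a ∈ A, a ≤ w) → w ≤ z → w = z

/-- Maximal elements of `S` lying below `x`. -/
def maxBelow {L : Type*} [PartialOrder L] (S : Set L) (x : L) : Set L :=
  {g ∈ S | g ≤ x ∧ ∀ g' ∈ S, g' ≤ x → g ≤ g' → g = g'}

/-- The support of a partition: union of its non-singleton blocks. -/
def suppPart {m : ℕ} (s : Setoid (Fin m)) : Set (Fin m) :=
  {x | ∃ y, x ≠ y ∧ s x y}

lemma blockSetoid_rel {m : ℕ} {B : Set (Fin m)} {x y : Fin m} :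
    blockSetoid B x y ↔ x = y ∨ (x ∈ B ∧ y ∈ B) := Iff.rfl

lemma blockSetoid_le {m : ℕ} {B : Set (Fin m)} {s : Setoid (Fin m)}
    (h : ∀ x ∈ B, ∀ y ∈ B, s x y) : blockSetoid B ≤ s := by
  rw [Setoid.le_def]
  rintro x y (rfl | ⟨hx, hy⟩)
  · exact s.refl x
  · exact h x hx y hy

lemma blockSetoid_mono {m : ℕ} {B C : Set (Fin m)} (h : B ⊆ C) :
    blockSetoid B ≤ blockSetoid C :=
  blockSetoid_le fun x hx y hy => Or.inr ⟨h hx, h hy⟩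

lemma classes_blockSetoid {m : ℕ} {B : Set (Fin m)} {c : Set (Fin m)}
    (hc : c ∈ (blockSetoid B).classes) : c = B ∨ ∃ x, c = {x} := by
  obtain ⟨y, rfl⟩ := hc
  by_cases hy : y ∈ B
  · left; ext x
    simp only [Set.mem_setOf_eq, blockSetoid_rel]
    constructor
    · rintro (rfl | ⟨hx, _⟩) <;> [exact hy; exact hx]
    · intro hx; exact Or.inr ⟨hx, hy⟩
  · right
    refine ⟨y, ?_⟩
    ext x
    simp only [Set.mem_setOf_eq, blockSetoid_rel, Set.mem_singleton_iff]
    constructor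
    · rintro (rfl | ⟨_, h⟩); exacts [rfl, absurd h hy]
    · rintro rfl; exact Or.inl rfl

lemma blockSetoid_mem_Pik {B : Set (Fin 7)} (h : B.ncard % 2 = 1) :
    blockSetoid B ∈ Pik 2 7 := by
  intro c hc
  rcases classes_blockSetoid hc with rfl | ⟨x, rfl⟩
  · show c.ncard % 2 = 1 % 2; simpa using h
  · show ({x} : Set (Fin 7)).ncard % 2 = 1 % 2; simp


/-- The class of `x` under `s` is a class. -/
lemma classOf_mem {m : ℕ} (s : Setoid (Fin m)) (x : Fin m) :
    {y | s x y} ∈ s.classes := by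
  refine ⟨x, ?_⟩
  ext y
  exact ⟨fun h => s.symm h, fun h => s.symm h⟩

lemma classOf_blockSetoid {m : ℕ} {B : Set (Fin m)} {x : Fin m} (hx : x ∈ B) :
    {y | blockSetoid B x y} = B := by
  ext y
  simp only [Set.mem_setOf_eq, blockSetoid_rel]
  constructor
  · rintro (rfl | ⟨_, h⟩); exacts [hx, h]
  · intro h; exact Or.inr ⟨hx, h⟩

lemma ncard4 : ({0,1,2,3} : Set (Fin 7)).ncard = 4 := by
  rw [show ({0,1,2,3} : Set (Fin 7)) = ↑({0,1,2,3} : Finset (Fin 7)) by simp,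
    Set.ncard_coe_finset]
  decide

/-- If `w ∈ Pik 2 7` is an upper bound of `a` and `b`, then the class of `0`
contains `{0,1,2,3}`. -/
lemma sub0123 {w : Setoid (Fin 7)}
    (ha : blockSetoid ({0,1,2} : Set (Fin 7)) ≤ w)
    (hb : blockSetoid ({1,2,3} : Set (Fin 7)) ≤ w) :
    ({0,1,2,3} : Set (Fin 7)) ⊆ {y | w 0 y} := by
  have h01 : w 0 1 := Setoid.le_def.mp ha (Or.inr ⟨by simp, by simp⟩)
  have h02 : w 0 2 := Setoid.le_def.mp ha (Or.inr ⟨by simp, by simp⟩)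
  have h13 : w 1 3 := Setoid.le_def.mp hb (Or.inr ⟨by simp, by simp⟩)
  intro x hx
  rcases hx with rfl | rfl | rfl | rfl
  · exact w.refl 0
  · exact h01
  · exact h02
  · exact w.trans h01 h13

lemma minUB_aux {e : Fin 7} (he : e ∉ ({0,1,2,3} : Set (Fin 7)))
    (hcard : ({0,1,2,3,e} : Set (Fin 7)).ncard = 5)
    {w : Setoid (Fin 7)} (hw : w ∈ Pik 2 7)
    (ha : blockSetoid ({0,1,2} : Set (Fin 7)) ≤ w)
    (hb : blockSetoid ({1,2,3} : Set (Fin 7)) ≤ w)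
    (hle : w ≤ blockSetoid ({0,1,2,3,e} : Set (Fin 7))) :
    w = blockSetoid ({0,1,2,3,e} : Set (Fin 7)) := by
  set C : Set (Fin 7) := {y | w 0 y} with hC
  have hsub : C ⊆ ({0,1,2,3,e} : Set (Fin 7)) := by
    intro y hy
    have := Setoid.le_def.mp hle hy
    rcases this with rfl | ⟨_, h⟩
    · simp
    · exact h
  have h0123 : ({0,1,2,3} : Set (Fin 7)) ⊆ C := sub0123 ha hb
  by_cases hec : e ∈ C
  · have hCeq : C = ({0,1,2,3,e} : Set (Fin 7)) := by
      apply Set.Subset.antisymm hsub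
      intro x hx
      rcases hx with rfl | rfl | rfl | rfl | rfl
      · exact h0123 (by simp)
      · exact h0123 (by simp)
      · exact h0123 (by simp)
      · exact h0123 (by simp)
      · exact hec
    refine le_antisymm hle (blockSetoid_le ?_)
    intro x hx y hy
    rw [← hCeq] at hx hy
    exact w.trans (w.symm hx) hy
  · exfalso
    have hCeq : C = ({0,1,2,3} : Set (Fin 7)) := by
      apply Set.Subset.antisymm _ h0123
      intro x hx
      rcases hsub hx with rfl | rfl | rfl | rfl | rfl
      · simp
      · simp
      · simp
      · simp
      · exact absurd hx hec
    have := hw C (classOf_mem w 0)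
    rw [hCeq, ncard4] at this
    exact absurd this (by decide)

/-- Extraction: every upper bound in P lies above some `blockSetoid {0,1,2,3,e}`. -/
lemma extract {z : Setoid (Fin 7)} (hz : z ∈ Pik 2 7)
    (ha : blockSetoid ({0,1,2} : Set (Fin 7)) ≤ z)
    (hb : blockSetoid ({1,2,3} : Set (Fin 7)) ≤ z) :
    ∃ e, e ∉ ({0,1,2,3} : Set (Fin 7)) ∧
      blockSetoid ({0,1,2,3,e} : Set (Fin 7)) ≤ z := by
  set C : Set (Fin 7) := {y | z 0 y} with hC
  have h0123 : ({0,1,2,3} : Set (Fin 7)) ⊆ C := sub0123 ha hb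
  have hne : C ≠ ({0,1,2,3} : Set (Fin 7)) := by
    intro h
    have := hz C (classOf_mem z 0)
    rw [h, ncard4] at this
    exact absurd this (by decide)
  have : ∃ e ∈ C, e ∉ ({0,1,2,3} : Set (Fin 7)) := by
    by_contra h
    push_neg at h
    exact hne (Set.Subset.antisymm h h0123)
  obtain ⟨e, heC, he⟩ := this
  refine ⟨e, he, blockSetoid_le ?_⟩
  intro x hx y hy
  have hxC : x ∈ C := by
    rcases hx with rfl | rfl | rfl | rfl | rfl
    · exact h0123 (by simp)
    · exact h0123 (by simp)
    · exact h0123 (by simp)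
    · exact h0123 (by simp)
    · exact heC
  have hyC : y ∈ C := by
    rcases hy with rfl | rfl | rfl | rfl | rfl
    · exact h0123 (by simp)
    · exact h0123 (by simp)
    · exact h0123 (by simp)
    · exact h0123 (by simp)
    · exact heC
  exact z.trans (z.symm hxC) hyC

lemma ncard5 (e : Fin 7) (h : e ∉ ({0,1,2,3} : Set (Fin 7))) :
    ({0,1,2,3,e} : Set (Fin 7)).ncard = 5 := by
  simp only [Set.mem_insert_iff, Set.mem_singleton_iff] at h
  push_neg at h
  obtain ⟨h0, h1, h2, h3⟩ := h
  rw [Set.ncard_insert_of_notMem (by simp [Ne.symm h0]) (Set.toFinite _),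
      Set.ncard_insert_of_notMem (by simp [Ne.symm h1]) (Set.toFinite _),
      Set.ncard_insert_of_notMem (by simp [Ne.symm h2]) (Set.toFinite _),
      Set.ncard_insert_of_notMem (by simp [Ne.symm h3]) (Set.toFinite _),
      Set.ncard_singleton]

lemma asub (e : Fin 7) : ({0,1,2} : Set (Fin 7)) ⊆ ({0,1,2,3,e} : Set (Fin 7)) := by
  intro x hx
  rcases hx with rfl | rfl | rfl <;> simp

lemma bsub (e : Fin 7) : ({1,2,3} : Set (Fin 7)) ⊆ ({0,1,2,3,e} : Set (Fin 7)) := by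
  intro x hx
  rcases hx with rfl | rfl | rfl <;> simp


/-- The poset `Pik 2 7` (partitions of a 7-set with all block sizes odd)
is not a lattice: the partitions `(123)4567` and `1(234)567` have exactly three distinct
minimal upper bounds `(12345)67`, `(12346)57`, `(12347)56`, and no least upper bound. -/
theorem stmt0 :
    let P : Set (Setoid (Fin 7)) := Pik 2 7
    let a := blockSetoid ({0, 1, 2} : Set (Fin 7))
    let b := blockSetoid ({1, 2, 3} : Set (Fin 7))
    let z₁ := blockSetoid ({0, 1, 2, 3, 4} : Set (Fin 7))
    let z₂ := blockSetoid ({0, 1, 2, 3, 5} : Set (Fin 7))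
    let z₃ := blockSetoid ({0, 1, 2, 3, 6} : Set (Fin 7))
    {z | IsMinUB P {a, b} z} = {z₁, z₂, z₃} ∧
    (z₁ ≠ z₂ ∧ z₁ ≠ z₃ ∧ z₂ ≠ z₃) ∧
    ¬ ∃ z ∈ P, a ≤ z ∧ b ≤ z ∧ ∀ w ∈ P, a ≤ w → b ≤ w → z ≤ w := by
  intro P a b z₁ z₂ z₃
  have hmin : ∀ e : Fin 7, e ∉ ({0,1,2,3} : Set (Fin 7)) →
      IsMinUB P {a, b} (blockSetoid ({0,1,2,3,e} : Set (Fin 7))) := by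
    intro e he
    refine ⟨blockSetoid_mem_Pik (by rw [ncard5 e he]), ?_, ?_⟩
    · rintro x (rfl | rfl)
      · exact blockSetoid_mono (asub e)
      · exact blockSetoid_mono (bsub e)
    · intro w hw hub hle
      exact minUB_aux he (ncard5 e he) hw (hub a (Or.inl rfl)) (hub b (Or.inr rfl)) hle
  refine ⟨?_, ⟨?_, ?_, ?_⟩, ?_⟩
  · ext z
    simp only [Set.mem_setOf_eq, Set.mem_insert_iff, Set.mem_singleton_iff]
    constructor
    · rintro ⟨hzP, hub, hmin'⟩
      obtain ⟨e, he, hle⟩ := extract hzP (hub a (Or.inl rfl)) (hub b (Or.inr rfl))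
      have hz : blockSetoid ({0,1,2,3,e} : Set (Fin 7)) = z := by
        refine hmin' _ (blockSetoid_mem_Pik (by rw [ncard5 e he])) ?_ hle
        rintro x (rfl | rfl)
        · exact blockSetoid_mono (asub e)
        · exact blockSetoid_mono (bsub e)
      fin_cases e
      · exact absurd (by simp) he
      · exact absurd (by simp) he
      · exact absurd (by simp) he
      · exact absurd (by simp) he
      · exact Or.inl hz.symm
      · exact Or.inr (Or.inl hz.symm)
      · exact Or.inr (Or.inr hz.symm)
    · rintro (rfl | rfl | rfl)
      · exact hmin 4 (by simp)
      · exact hmin 5 (by simp)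
      · exact hmin 6 (by simp)
  · intro h
    have h1 : z₁ 0 4 := Or.inr ⟨by simp, by simp⟩
    rw [h] at h1
    have h1' : (0 : Fin 7) = 4 ∨ ((0:Fin 7) ∈ ({0,1,2,3,5}:Set (Fin 7)) ∧ (4:Fin 7) ∈ ({0,1,2,3,5}:Set (Fin 7))) := h1
    rcases h1' with h' | ⟨-, h'⟩
    · exact absurd h' (by decide)
    · simp at h'
  · intro h
    have h1 : z₁ 0 4 := Or.inr ⟨by simp, by simp⟩
    rw [h] at h1
    have h1' : (0 : Fin 7) = 4 ∨ ((0:Fin 7) ∈ ({0,1,2,3,6}:Set (Fin 7)) ∧ (4:Fin 7) ∈ ({0,1,2,3,6}:Set (Fin 7))) := h1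
    rcases h1' with h' | ⟨-, h'⟩
    · exact absurd h' (by decide)
    · simp at h'
  · intro h
    have h1 : z₂ 0 5 := Or.inr ⟨by simp, by simp⟩
    rw [h] at h1
    have h1' : (0 : Fin 7) = 5 ∨ ((0:Fin 7) ∈ ({0,1,2,3,6}:Set (Fin 7)) ∧ (5:Fin 7) ∈ ({0,1,2,3,6}:Set (Fin 7))) := h1
    rcases h1' with h' | ⟨-, h'⟩
    · exact absurd h' (by decide)
    · simp at h'
  · rintro ⟨z, hzP, haz, hbz, hleast⟩
    have hm4 := hmin 4 (by simp)
    have hm5 := hmin 5 (by simp)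
    have hz1 : z ≤ z₁ := hleast z₁ hm4.1 (blockSetoid_mono (asub 4)) (blockSetoid_mono (bsub 4))
    have hz2 : z ≤ z₂ := hleast z₂ hm5.1 (blockSetoid_mono (asub 5)) (blockSetoid_mono (bsub 5))
    have h0123 := sub0123 haz hbz
    have hsub : {y | z 0 y} ⊆ ({0,1,2,3} : Set (Fin 7)) := by
      intro y hy
      have hy1 : (0 : Fin 7) = y ∨ ((0:Fin 7) ∈ ({0,1,2,3,4}:Set (Fin 7)) ∧ y ∈ ({0,1,2,3,4}:Set (Fin 7))) :=
        Setoid.le_def.mp hz1 hy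
      have hy2 : (0 : Fin 7) = y ∨ ((0:Fin 7) ∈ ({0,1,2,3,5}:Set (Fin 7)) ∧ y ∈ ({0,1,2,3,5}:Set (Fin 7))) :=
        Setoid.le_def.mp hz2 hy
      rcases hy1 with rfl | ⟨-, hy1⟩
      · simp
      rcases hy2 with rfl | ⟨-, hy2⟩
      · simp
      rcases hy1 with rfl | rfl | rfl | rfl | rfl
      · simp
      · simp
      · simp
      · simp
      · simp at hy2
    have hCeq : {y | z 0 y} = ({0,1,2,3} : Set (Fin 7)) := Set.Subset.antisymm hsub h0123
    have := hzP _ (classOf_mem z 0)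
    rw [hCeq, ncard4] at this
    exact absurd this (by decide)
end
end

section
/- Let L be a meet-semilattice with a building set G, and let x > y in L. Then for any two incomparable elements z₁ ∈ F(x) and z₂ ∈ F(y), the join z₁ ∨ z₂ exists and does not belong to G; consequently F(x) ∪ F(y) is a G-nested set, and in the face poset of the nested set complex N(L, G), the join of the faces F(x) and F(y) equals F(x) ∪ F(y). -/
open Classical Set
noncomputable section

/-- The factors of `x` with respect to `G`: the maximal elements of `G` below `x`. -/
def factors {L : Type*} [SemilatticeInf L] [OrderBot L] (G : Set L) (x : L) : Set L :=
  {g ∈ G | g ≤ x ∧ ∀ g' ∈ G, g' ≤ x → g ≤ g' → g = g'}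

/-- `G` is a building set of the meet-semilattice `L`: for every `x ≠ ⊥` the interval
`[⊥, x]` is order-isomorphic to the product of the intervals `[⊥, z]` over the factors
`z` of `x`, via a map restricting to the identity on each factor. -/
def IsBuildingSet {L : Type*} [SemilatticeInf L] [OrderBot L] (G : Set L) : Prop :=
  (⊥ : L) ∉ G ∧ ∀ x : L, x ≠ ⊥ →
    ∃ φ : ((z : factors G x) → Set.Icc (⊥ : L) z.1) ≃o Set.Icc (⊥ : L) x,
      ∀ z : factors G x,
        ((φ (fun w => if h : w = z then ⟨z.1, bot_le, (congrArg Subtype.val h).ge⟩ else ⟨⊥, le_rfl, bot_le⟩) : Set.Icc (⊥ : L) x) : L) = z.1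

/-- `N` is a `G`-nested set: `N ⊆ G` and every antichain in `N` of size at least `2`
has a least upper bound in `L` which does not belong to `G`. -/
def IsNestedSet {L : Type*} [SemilatticeInf L] [OrderBot L] (G : Set L) (N : Set L) : Prop :=
  N ⊆ G ∧ ∀ S : Finset L, ↑S ⊆ N → 2 ≤ S.card →
    (∀ a ∈ S, ∀ b ∈ S, a ≠ b → ¬ a ≤ b) →
    ∃ s, IsLUB (↑S : Set L) s ∧ s ∉ G

lemma lub_aux {L : Type*} [SemilatticeInf L] [OrderBot L] {G : Set L}
    (hG : IsBuildingSet G) {x : L} (hx : x ≠ ⊥) {A : Set L}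
    (hA : A ⊆ factors G x) {b : L} (hb : b ≤ x) :
    ∃ s, IsLUB (insert b A) s ∧ s ≤ x := by
  classical
  obtain ⟨φ, hφ⟩ := hG.2 x hx
  set bI : Set.Icc (⊥:L) x := ⟨b, bot_le, hb⟩ with hbI
  set δ : (z : ↥(factors G x)) → (w : ↥(factors G x)) → Set.Icc (⊥:L) w.1 := fun z w =>
    if h : w = z then ⟨z.1, bot_le, (congrArg Subtype.val h).ge⟩ else ⟨⊥, le_rfl, bot_le⟩
    with hδ
  have hφδ : ∀ z : ↥(factors G x), ((φ (δ z) : Set.Icc (⊥:L) x) : L) = z.1 := hφ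
  set u : (z : ↥(factors G x)) → Set.Icc (⊥:L) z.1 :=
    fun z => if hz : z.1 ∈ A then ⟨z.1, bot_le, le_rfl⟩ else φ.symm bI z with hu
  -- b ≤ φ u
  have h1 : φ.symm bI ≤ u := by
    intro z
    by_cases hz : z.1 ∈ A
    · simp only [hu, dif_pos hz]
      exact Subtype.coe_le_coe.mp ((φ.symm bI z).2.2)
    · simp only [hu, dif_neg hz]
      exact le_rfl
  have hbu : bI ≤ φ u := by
    have := φ.le_iff_le.mpr h1
    rwa [φ.apply_symm_apply] at this
  -- each a ∈ A is ≤ φ u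
  have hδu : ∀ (z : ↥(factors G x)), z.1 ∈ A → δ z ≤ u := by
    intro z hz w
    by_cases h : w = z
    · have hwA : w.1 ∈ A := by rw [h]; exact hz
      simp only [hδ, dif_pos h, hu, dif_pos hwA]
      exact Subtype.mk_le_mk.mpr (congrArg Subtype.val h).ge
    · simp only [hδ, dif_neg h]
      exact Subtype.coe_le_coe.mp bot_le
  have hub : ∀ a ∈ insert b A, a ≤ ((φ u : Set.Icc (⊥:L) x) : L) := by
    intro a ha
    rcases Set.mem_insert_iff.mp ha with rfl | haA
    · exact Subtype.coe_le_coe.mpr hbu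
    · have h2 := φ.le_iff_le.mpr (hδu ⟨a, hA haA⟩ haA)
      calc a = ((φ (δ ⟨a, hA haA⟩) : Set.Icc (⊥:L) x) : L) := (hφδ ⟨a, hA haA⟩).symm
        _ ≤ _ := Subtype.coe_le_coe.mpr h2
  -- least upper bound
  have hleast : ∀ v ∈ upperBounds (insert b A), ((φ u : Set.Icc (⊥:L) x) : L) ≤ v := by
    intro v hv
    have hbv : b ≤ v := hv (Set.mem_insert _ _)
    set vI : Set.Icc (⊥:L) x := ⟨v ⊓ x, bot_le, inf_le_right⟩ with hvI
    have huv : u ≤ φ.symm vI := by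
      intro w
      by_cases hw : w.1 ∈ A
      · have h1 : φ (δ w) ≤ vI := by
          rw [← Subtype.coe_le_coe, hφδ w]
          exact le_inf (hv (Set.mem_insert_of_mem _ hw)) (hA hw).2.1
        have h2 : δ w ≤ φ.symm vI := by
          rw [← φ.le_iff_le, φ.apply_symm_apply]
          exact h1
        have h3 := h2 w
        simp only [hδ, dif_pos rfl] at h3
        simp only [hu, dif_pos hw]
        exact h3
      · simp only [hu, dif_neg hw]
        exact (φ.symm.monotone (show bI ≤ vI from Subtype.mk_le_mk.mpr (le_inf hbv hb))) w
    have h4 : φ u ≤ vI := by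
      have := φ.le_iff_le.mpr huv
      rwa [φ.apply_symm_apply] at this
    exact le_trans (Subtype.coe_le_coe.mpr h4) inf_le_left
  exact ⟨((φ u : Set.Icc (⊥:L) x) : L), ⟨fun a ha => hub a ha, fun v hv => hleast v hv⟩,
    (φ u).2.2⟩

lemma isLUB_of_insert_bot {L : Type*} [SemilatticeInf L] [OrderBot L] {B : Set L} {j : L}
    (h : IsLUB (insert (⊥:L) B) j) : IsLUB B j :=
  ⟨fun a ha => h.1 (Set.mem_insert_of_mem _ ha),
   fun v hv => h.2 (by
      rintro w hw
      rcases Set.mem_insert_iff.mp hw with rfl | hw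
      · exact bot_le
      · exact hv hw)⟩

lemma isLUB_union' {L : Type*} [Preorder L] {A B : Set L} {j s : L}
    (hj : IsLUB B j) (hs : IsLUB (insert j A) s) : IsLUB (A ∪ B) s := by
  constructor
  · rintro w (hw | hw)
    · exact hs.1 (Set.mem_insert_of_mem _ hw)
    · exact (hj.1 hw).trans (hs.1 (Set.mem_insert _ _))
  · intro v hv
    refine hs.2 ?_
    rintro w hw
    rcases Set.mem_insert_iff.mp hw with rfl | hw
    · exact hj.2 (fun c hc => hv (Or.inr hc))
    · exact hv (Or.inl hw)

/-- If `G` is a building set of the meet-semilattice `L` and `x > y`,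
then any two incomparable factors `z₁` of `x` and `z₂` of `y` have a join not in `G`;
consequently `factors G x ∪ factors G y` is `G`-nested, and it is the join of the faces
`factors G x` and `factors G y` in the (inclusion-ordered) face poset of the nested set
complex, i.e. the least nested set containing both. -/
theorem stmt4 {L : Type*} [SemilatticeInf L] [OrderBot L] {G : Set L}
    (hG : IsBuildingSet G) {x y : L} (hxy : y < x) :
    (∀ z₁ ∈ factors G x, ∀ z₂ ∈ factors G y, ¬ z₁ ≤ z₂ → ¬ z₂ ≤ z₁ →
      ∃ s, IsLUB ({z₁, z₂} : Set L) s ∧ s ∉ G) ∧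
    IsNestedSet G (factors G x ∪ factors G y) ∧
    (∀ M : Set L, IsNestedSet G M → factors G x ⊆ M → factors G y ⊆ M →
      factors G x ∪ factors G y ⊆ M) := by
  classical
  have hx : x ≠ ⊥ := by rintro rfl; exact not_lt_bot hxy
  refine ⟨?_, ⟨?_, ?_⟩, ?_⟩
  · -- part 1
    intro z₁ hz₁ z₂ hz₂ h12 h21
    obtain ⟨s, hs, hsx⟩ := lub_aux hG hx (Set.singleton_subset_iff.mpr hz₁)
      (le_trans hz₂.2.1 hxy.le)
    refine ⟨s, ?_, ?_⟩
    · rw [Set.pair_comm z₁ z₂]; exact hs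
    · intro hsG
      have hz₁s : z₁ ≤ s := hs.1 (Set.mem_insert_of_mem _ rfl)
      have heq : z₁ = s := hz₁.2.2 s hsG hsx hz₁s
      exact h21 (by rw [heq]; exact hs.1 (Set.mem_insert _ _))
  · -- nested: subset of G
    exact Set.union_subset (fun a ha => ha.1) (fun a ha => ha.1)
  · -- nested: antichains have LUBs not in G
    intro S hS hcard hanti
    set A : Set L := ↑S ∩ factors G x with hAdef
    set B : Set L := ↑S \ factors G x with hBdef
    have hBy : B ⊆ factors G y := fun w hw => (hS hw.1).resolve_left hw.2
    have hABS : A ∪ B = (↑S : Set L) := Set.inter_union_diff _ _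
    obtain ⟨j, hj, hjx⟩ : ∃ j, IsLUB B j ∧ j ≤ x := by
      by_cases hB : B.Nonempty
      · obtain ⟨g, hg⟩ := hB
        have hgy := hBy hg
        have hy : y ≠ ⊥ := by
          rintro rfl
          exact hG.1 (le_bot_iff.mp hgy.2.1 ▸ hgy.1)
        obtain ⟨j, hj, hjy⟩ := lub_aux hG hy hBy (bot_le : (⊥:L) ≤ y)
        exact ⟨j, isLUB_of_insert_bot hj, hjy.trans hxy.le⟩
      · rw [Set.not_nonempty_iff_eq_empty] at hB
        refine ⟨⊥, ?_, bot_le⟩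
        rw [hB]
        exact ⟨fun a ha => absurd ha (Set.notMem_empty a), fun v _ => bot_le⟩
    obtain ⟨s, hs, hsx⟩ := lub_aux hG hx (Set.inter_subset_right : A ⊆ factors G x) hjx
    have hsS : IsLUB (↑S : Set L) s := by
      rw [← hABS]; exact isLUB_union' hj hs
    refine ⟨s, hsS, ?_⟩
    intro hsG
    have key : ∃ a ∈ S, a = s := by
      by_cases hA' : A.Nonempty
      · obtain ⟨a, haS, haF⟩ := hA'
        exact ⟨a, haS, haF.2.2 s hsG hsx (hsS.1 haS)⟩
      · rw [Set.not_nonempty_iff_eq_empty] at hA'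
        have hall : (↑S : Set L) ⊆ factors G y := by
          rw [← hABS, hA', Set.empty_union]; exact hBy
        obtain ⟨a, haS⟩ := Finset.card_pos.mp (show 0 < S.card by omega)
        have hsy : s ≤ y := hsS.2 (fun w hw => (hall hw).2.1)
        exact ⟨a, haS, (hall haS).2.2 s hsG hsy (hsS.1 haS)⟩
    obtain ⟨a, haS, has⟩ := key
    obtain ⟨c, hcS, hca⟩ := Finset.exists_mem_ne (show 1 < S.card by omega) a
    exact hanti c hcS a haS hca (by rw [has]; exact hsS.1 (Finset.mem_coe.mpr hcS))
  · -- least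
    intro M _ h1 h2
    exact Set.union_subset h1 h2
end
end

section
/- Let L be a meet-semilattice with building set G and let N ⊆ G be a nested set. Then for any antichain {x₁,...,x_ℓ} ⊆ N with ℓ ≥ 2, the set of factors of the join satisfies F(x₁ ∨ ... ∨ x_ℓ) = {x₁,...,x_ℓ}. -/
open Classical Set
noncomputable section

section Aux

variable {L : Type*} [SemilatticeInf L] [OrderBot L] {G : Set L} {x : L}

/-- The "unit tuple" with value `z` at coordinate `z` and `⊥` elsewhere. -/
def unitT (z : factors G x) : (w : factors G x) → Set.Icc (⊥ : L) w.1 :=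
  fun w => if h : w = z then ⟨z.1, bot_le, (congrArg Subtype.val h).ge⟩ else ⟨⊥, le_rfl, bot_le⟩

/-- The bottom tuple. -/
def botT : (w : factors G x) → Set.Icc (⊥ : L) w.1 := fun _ => ⟨⊥, le_rfl, bot_le⟩

/-- The top tuple. -/
def topT : (w : factors G x) → Set.Icc (⊥ : L) w.1 := fun w => ⟨w.1, bot_le, le_rfl⟩

/-- Coordinatewise meet of tuples. -/
def tmeet (a b : (w : factors G x) → Set.Icc (⊥ : L) w.1) :
    (w : factors G x) → Set.Icc (⊥ : L) w.1 :=
  fun w => ⟨(a w).1 ⊓ (b w).1, bot_le, le_trans inf_le_left (a w).2.2⟩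

variable (φ : ((z : factors G x) → Set.Icc (⊥ : L) z.1) ≃o Set.Icc (⊥ : L) x)

lemma phi_botT : ((φ botT : Set.Icc (⊥ : L) x) : L) = ⊥ := by
  have h : botT ≤ φ.symm ⟨⊥, le_rfl, bot_le⟩ := fun w => bot_le
  have h2 := φ.monotone h
  rw [φ.apply_symm_apply] at h2
  exact le_bot_iff.1 h2

lemma symm_topIcc : φ.symm ⟨x, bot_le, le_rfl⟩ = topT := by
  apply le_antisymm
  · intro w
    exact (φ.symm ⟨x, bot_le, le_rfl⟩ w).2.2
  · rw [OrderIso.le_symm_apply]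
    exact (φ topT).2.2

lemma phi_topT : ((φ topT : Set.Icc (⊥ : L) x) : L) = x := by
  rw [← symm_topIcc φ, φ.apply_symm_apply]

lemma phi_tmeet (a b : (w : factors G x) → Set.Icc (⊥ : L) w.1) :
    ((φ (tmeet a b) : Set.Icc (⊥ : L) x) : L) = (φ a : L) ⊓ (φ b : L) := by
  apply le_antisymm
  · exact le_inf (φ.monotone fun w => inf_le_left) (φ.monotone fun w => inf_le_right)
  · have hm : (φ a : L) ⊓ (φ b : L) ≤ x := le_trans inf_le_left (φ a).2.2
    set m : Set.Icc (⊥ : L) x := ⟨(φ a : L) ⊓ (φ b : L), bot_le, hm⟩ with hmdef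
    have ha : φ.symm m ≤ a := by
      rw [OrderIso.symm_apply_le]
      exact inf_le_left
    have hb : φ.symm m ≤ b := by
      rw [OrderIso.symm_apply_le]
      exact inf_le_right
    have hle : φ.symm m ≤ tmeet a b := fun w => le_inf (ha w) (hb w)
    have := φ.monotone hle
    rw [φ.apply_symm_apply] at this
    exact this

variable (hφ : ∀ z : factors G x, ((φ (unitT z) : Set.Icc (⊥ : L) x) : L) = z.1)

include hφ in
/-- Distinct factors meet at `⊥`. -/
lemma factor_inf_eq_bot {z z' : factors G x} (hne : z ≠ z') : z.1 ⊓ z'.1 = ⊥ := by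
  have hbot : tmeet (unitT z) (unitT z') = botT := by
    funext w
    apply Subtype.ext
    show (unitT z w).1 ⊓ (unitT z' w).1 = ⊥
    by_cases h : w = z
    · subst h
      simp [unitT, hne]
    · simp [unitT, h]
  have := phi_tmeet φ (unitT z) (unitT z')
  rw [hbot, hφ z, hφ z', phi_botT φ] at this
  exact this.symm

include hφ in
/-- Every element `q ≤ x` is the least upper bound of its meets with the factors. -/
lemma row_isLUB {q : L} (hq : q ≤ x) :
    IsLUB {y : L | ∃ z ∈ factors G x, y = q ⊓ z} q := by
  constructor
  · rintro y ⟨z, _, rfl⟩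
    exact inf_le_left
  · intro b hb
    have hm : q ⊓ b ≤ x := le_trans inf_le_left hq
    set m : Set.Icc (⊥ : L) x := ⟨q ⊓ b, bot_le, hm⟩ with hmdef
    set τ := φ.symm ⟨q, bot_le, hq⟩ with hτ
    have hτval : ((φ τ : Set.Icc (⊥ : L) x) : L) = q := by
      rw [hτ, φ.apply_symm_apply]
    have key : τ ≤ φ.symm m := by
      intro w
      have h1 : tmeet τ (unitT w) ≤ φ.symm m := by
        rw [OrderIso.le_symm_apply]
        show ((φ (tmeet τ (unitT w)) : Set.Icc (⊥ : L) x) : L) ≤ q ⊓ b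
        rw [phi_tmeet φ, hφ w, hτval]
        exact le_inf inf_le_left (hb ⟨w.1, w.2, rfl⟩)
      have h2 := h1 w
      have h3 : ((tmeet τ (unitT w) w : Set.Icc (⊥ : L) w.1) : L) = (τ w).1 := by
        show (τ w).1 ⊓ (unitT w w).1 = (τ w).1
        have : (unitT w w).1 = w.1 := by simp [unitT]
        rw [this]
        exact inf_eq_left.mpr (τ w).2.2
      calc (τ w).1 = ((tmeet τ (unitT w) w : Set.Icc (⊥ : L) w.1) : L) := h3.symm
        _ ≤ ((φ.symm m w : Set.Icc (⊥ : L) w.1) : L) := h2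
    have h4 := φ.monotone key
    rw [φ.apply_symm_apply, φ.apply_symm_apply] at h4
    have h5 : q ≤ q ⊓ b := h4
    exact le_trans h5 inf_le_right

include hφ in
/-- Each factor `z` is the least upper bound of the meets `w ⊓ z` where `w` ranges over
any set whose least upper bound is `x`. -/
lemma col_isLUB {A : Set L} (hA : IsLUB A x) {z : factors G x} :
    IsLUB {y : L | ∃ w ∈ A, y = w ⊓ z.1} z.1 := by
  constructor
  · rintro y ⟨w, _, rfl⟩
    exact inf_le_right
  · intro b hb
    have hm : b ⊓ z.1 ≤ x := le_trans inf_le_right z.2.2.1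
    set m : Set.Icc (⊥ : L) x := ⟨b ⊓ z.1, bot_le, hm⟩ with hmdef
    set c := φ.symm m with hc
    set ρ : (w : factors G x) → Set.Icc (⊥ : L) w.1 :=
      fun w => if h : w = z then c w else topT w with hρ
    have hub : ∀ a ∈ A, a ≤ ((φ ρ : Set.Icc (⊥ : L) x) : L) := by
      intro a ha
      have hax : a ≤ x := hA.1 ha
      set τ := φ.symm ⟨a, bot_le, hax⟩ with hτ
      have hτval : ((φ τ : Set.Icc (⊥ : L) x) : L) = a := by
        rw [hτ, φ.apply_symm_apply]
      have hτρ : τ ≤ ρ := by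
        intro w
        by_cases h : w = z
        · subst h
          have h1 : tmeet τ (unitT w) ≤ c := by
            rw [hc, OrderIso.le_symm_apply]
            show ((φ (tmeet τ (unitT w)) : Set.Icc (⊥ : L) x) : L) ≤ b ⊓ w.1
            rw [phi_tmeet φ, hφ w, hτval]
            exact le_inf (le_trans le_rfl (hb ⟨a, ha, rfl⟩)) inf_le_right
          have h2 := h1 w
          have h3 : ((tmeet τ (unitT w) w : Set.Icc (⊥ : L) w.1) : L) = (τ w).1 := by
            show (τ w).1 ⊓ (unitT w w).1 = (τ w).1
            have : (unitT w w).1 = w.1 := by simp [unitT]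
            rw [this]
            exact inf_eq_left.mpr (τ w).2.2
          have h4 : (τ w).1 ≤ ((c w : Set.Icc (⊥ : L) w.1) : L) := by
            rw [← h3]; exact h2
          show τ w ≤ ρ w
          rw [hρ]
          simpa using h4
        · show τ w ≤ ρ w
          rw [hρ]
          simp only [h, dif_neg, not_false_iff]
          exact (τ w).2.2
      calc a = ((φ τ : Set.Icc (⊥ : L) x) : L) := hτval.symm
        _ ≤ ((φ ρ : Set.Icc (⊥ : L) x) : L) := φ.monotone hτρ
    have hx : x ≤ ((φ ρ : Set.Icc (⊥ : L) x) : L) := hA.2 hub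
    have hρtop : ρ = topT := by
      have : φ ρ = ⟨x, bot_le, le_rfl⟩ := Subtype.ext (le_antisymm (φ ρ).2.2 hx)
      have h6 : ρ = φ.symm ⟨x, bot_le, le_rfl⟩ := by
        rw [← this, φ.symm_apply_apply]
      rw [h6, symm_topIcc φ]
    have hcz : ((c z : Set.Icc (⊥ : L) z.1) : L) = z.1 := by
      have : ρ z = topT z := by rw [hρtop]
      rw [hρ] at this
      simp only [dif_pos] at this
      rw [this]
      rfl
    have huc : unitT z ≤ c := by
      intro w
      by_cases h : w = z
      · subst h
        show ((unitT w w : Set.Icc (⊥ : L) w.1) : L) ≤ (c w).1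
        have : (unitT w w).1 = w.1 := by simp [unitT]
        rw [this, hcz]
      · show ((unitT z w : Set.Icc (⊥ : L) w.1) : L) ≤ (c w).1
        have : (unitT z w).1 = ⊥ := by simp [unitT, h]
        rw [this]
        exact bot_le
    have h7 := φ.monotone huc
    rw [hc, φ.apply_symm_apply] at h7
    have h8 : z.1 ≤ b ⊓ z.1 := by
      calc z.1 = ((φ (unitT z) : Set.Icc (⊥ : L) x) : L) := (hφ z).symm
        _ ≤ b ⊓ z.1 := h7
    exact le_trans h8 inf_le_left

/-- **Key lemma**: if `g ∈ G`, `g ≤ x` and `g ⊓ z₀ ≠ ⊥` for some factor `z₀` of `x`,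
then `g ≤ z₀`. -/
lemma le_factor_of_inf_ne_bot (hG : IsBuildingSet G) (hx : x ≠ ⊥) {g : L} {z₀ : factors G x}
    (hg : g ∈ G) (hgx : g ≤ x) (hne : g ⊓ z₀.1 ≠ ⊥) : g ≤ z₀.1 := by
  obtain ⟨φ, hφ⟩ := hG.2 x hx
  have hφ' : ∀ z : factors G x, ((φ (unitT z) : Set.Icc (⊥ : L) x) : L) = z.1 := hφ
  -- the element u = g ⊔ z₀
  set τg := φ.symm ⟨g, bot_le, hgx⟩ with hτg
  have hτgval : ((φ τg : Set.Icc (⊥ : L) x) : L) = g := by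
    rw [hτg, φ.apply_symm_apply]
  set υ : (w : factors G x) → Set.Icc (⊥ : L) w.1 :=
    fun w => if h : w = z₀ then topT w else τg w with hυ
  set u : L := ((φ υ : Set.Icc (⊥ : L) x) : L) with hu
  have hgu : g ≤ u := by
    have : τg ≤ υ := by
      intro w
      by_cases h : w = z₀
      · rw [hυ]; simp only [h, dif_pos]; exact (τg w).2.2
      · rw [hυ]; simp only [h, dif_neg, not_false_iff]
        exact le_rfl
    calc g = ((φ τg : Set.Icc (⊥ : L) x) : L) := hτgval.symm
      _ ≤ u := φ.monotone this
  have hz₀u : z₀.1 ≤ u := by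
    have : unitT z₀ ≤ υ := by
      intro w
      by_cases h : w = z₀
      · subst h
        rw [hυ]
        simp only [dif_pos]
        show ((unitT w w : Set.Icc (⊥ : L) w.1) : L) ≤ w.1
        exact (unitT w w).2.2
      · rw [hυ]
        simp only [h, dif_neg, not_false_iff]
        show ((unitT z₀ w : Set.Icc (⊥ : L) w.1) : L) ≤ (τg w).1
        have : (unitT z₀ w).1 = ⊥ := by simp [unitT, h]
        rw [this]; exact bot_le
    calc z₀.1 = ((φ (unitT z₀) : Set.Icc (⊥ : L) x) : L) := (hφ' z₀).symm
      _ ≤ u := φ.monotone this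
  have hux : u ≤ x := (φ υ).2.2
  have hz₀bot : z₀.1 ≠ ⊥ := fun h => hG.1 (h ▸ z₀.2.1)
  have hu0 : u ≠ ⊥ := fun h => hz₀bot (le_bot_iff.1 (h ▸ hz₀u))
  obtain ⟨ψ, hψ⟩ := hG.2 u hu0
  have hψ' : ∀ z : factors G u, ((ψ (unitT z) : Set.Icc (⊥ : L) u) : L) = z.1 := hψ
  -- z₀ is a factor of u
  have hz₀fu : z₀.1 ∈ factors G u :=
    ⟨z₀.2.1, hz₀u, fun g' hg' hg'u hle => z₀.2.2.2 g' hg' (le_trans hg'u hux) hle⟩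
  -- every factor of u equals z₀
  have hall : ∀ v : factors G u, v.1 = z₀.1 := by
    intro v
    by_contra hvne
    have hvz₀ : v.1 ⊓ z₀.1 = ⊥ := by
      have hne2 : v ≠ (⟨z₀.1, hz₀fu⟩ : factors G u) := fun h => hvne (congrArg Subtype.val h)
      exact factor_inf_eq_bot ψ hψ' hne2
    have hvu : v.1 ≤ u := v.2.2.1
    have hvx : v.1 ≤ x := le_trans hvu hux
    set τv := φ.symm ⟨v.1, bot_le, hvx⟩ with hτv
    have hτvval : ((φ τv : Set.Icc (⊥ : L) x) : L) = v.1 := by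
      rw [hτv, φ.apply_symm_apply]
    have hτvυ : τv ≤ υ := by
      have : (⟨v.1, bot_le, hvx⟩ : Set.Icc (⊥ : L) x) ≤ φ υ := by
        show v.1 ≤ u
        exact hvu
      have h2 := φ.symm.monotone this
      rw [φ.symm_apply_apply] at h2
      exact h2
    -- coordinate at z₀ of τv is ⊥
    have hcoordbot : (τv z₀).1 = ⊥ := by
      have h1 : ((φ (tmeet τv (unitT z₀)) : Set.Icc (⊥ : L) x) : L) = ⊥ := by
        rw [phi_tmeet φ, hφ' z₀, hτvval, hvz₀]
      have h2 : ((φ botT : Set.Icc (⊥ : L) x) : L) = ⊥ := phi_botT φ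
      have h3 : tmeet τv (unitT z₀) = botT := by
        have := Subtype.ext (h1.trans h2.symm)
        exact φ.injective this
      have h4 := congrFun h3 z₀
      have h5 : (τv z₀).1 ⊓ (unitT z₀ z₀).1 = ⊥ := congrArg Subtype.val h4
      have h6 : (unitT z₀ z₀).1 = z₀.1 := by simp [unitT]
      rw [h6] at h5
      rw [← inf_eq_left.mpr (τv z₀).2.2]
      exact h5
    have hτvτg : τv ≤ τg := by
      intro w
      by_cases h : w = z₀
      · subst h
        show ((τv w : Set.Icc (⊥ : L) w.1) : L) ≤ (τg w).1
        rw [hcoordbot]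
        exact bot_le
      · have := hτvυ w
        rw [hυ] at this
        simp only [h, dif_neg, not_false_iff] at this
        exact this
    have hvg : v.1 ≤ g := by
      calc v.1 = ((φ τv : Set.Icc (⊥ : L) x) : L) := hτvval.symm
        _ ≤ g := by rw [← hτgval]; exact φ.monotone hτvτg
    have hveq : v.1 = g := v.2.2.2 g hg hgu hvg
    rw [hveq] at hvz₀
    exact hne hvz₀
  -- g is the LUB of its meets with factors of u, all of which are g ⊓ z₀
  have hrow := row_isLUB ψ hψ' hgu
  have hub : g ⊓ z₀.1 ∈ upperBounds {y : L | ∃ z ∈ factors G u, y = g ⊓ z} := by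
    rintro y ⟨v, hv, rfl⟩
    have h := hall ⟨v, hv⟩
    exact le_of_eq (congrArg (fun t => g ⊓ t) h)
  exact le_trans (hrow.2 hub) inf_le_right

end Aux

/-- If `N` is `G`-nested and `S ⊆ N` is an antichain with at least two
elements, then the factors of the join of `S` are exactly the elements of `S`. -/
theorem stmt5 {L : Type*} [SemilatticeInf L] [OrderBot L] {G N : Set L}
    (hG : IsBuildingSet G) (hN : IsNestedSet G N)
    (S : Finset L) (hS : ↑S ⊆ N) (hcard : 2 ≤ S.card)
    (hanti : ∀ a ∈ S, ∀ b ∈ S, a ≠ b → ¬ a ≤ b)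
    (s : L) (hs : IsLUB (↑S : Set L) s) :
    factors G s = ↑S := by
  -- s ∉ G
  obtain ⟨s', hs', hs'G⟩ := hN.2 S hS hcard hanti
  have hseq : s' = s := hs'.unique hs
  have hsG : s ∉ G := hseq ▸ hs'G
  -- S is nonempty, elements are in G and ≠ ⊥
  have hSG : ∀ w ∈ S, w ∈ G := fun w hw => hN.1 (hS hw)
  have hSbot : ∀ w ∈ S, w ≠ (⊥ : L) := fun w hw h => hG.1 (h ▸ hSG w hw)
  have hSne : S.Nonempty := Finset.card_pos.mp (lt_of_lt_of_le (by norm_num) hcard)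
  have hsbot : s ≠ ⊥ := by
    obtain ⟨w, hw⟩ := hSne
    intro h
    exact hSbot w hw (le_bot_iff.1 (h ▸ hs.1 (Finset.mem_coe.mpr hw)))
  obtain ⟨φ, hφ⟩ := hG.2 s hsbot
  have hφ' : ∀ z : factors G s, ((φ (unitT z) : Set.Icc (⊥ : L) s) : L) = z.1 := hφ
  -- every w ∈ S lies below some factor
  have hex : ∀ w ∈ S, ∃ z ∈ factors G s, w ≤ z := by
    intro w hw
    have hwx : w ≤ s := hs.1 (Finset.mem_coe.mpr hw)
    have hrow := row_isLUB φ hφ' hwx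
    by_cases hz : ∃ z ∈ factors G s, w ⊓ z ≠ ⊥
    · obtain ⟨z, hzf, hzne⟩ := hz
      exact ⟨z, hzf, le_factor_of_inf_ne_bot hG hsbot (z₀ := ⟨z, hzf⟩) (hSG w hw) hwx hzne⟩
    · push_neg at hz
      exfalso
      have hub : (⊥ : L) ∈ upperBounds {y : L | ∃ z ∈ factors G s, y = w ⊓ z} := by
        rintro y ⟨z, hzf, rfl⟩
        rw [hz z hzf]
      exact hSbot w hw (le_bot_iff.1 (hrow.2 hub))
  -- factors G s ⊆ S
  have hFS : ∀ z ∈ factors G s, z ∈ S := by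
    intro z hzf
    have hcol := col_isLUB φ hφ' hs (z := ⟨z, hzf⟩)
    set T : Finset L := S.filter (fun w => w ≤ z) with hT
    have hTS : T ⊆ S := Finset.filter_subset _ _
    -- z is the LUB of T
    have hlubT : IsLUB (↑T : Set L) z := by
      constructor
      · intro w hw
        exact (Finset.mem_filter.mp (Finset.mem_coe.mp hw)).2
      · intro b hb
        apply hcol.2
        rintro y ⟨w, hw, rfl⟩
        by_cases hwz : w ≤ z
        · have : w ∈ T := Finset.mem_filter.mpr ⟨Finset.mem_coe.mp hw, hwz⟩
          calc w ⊓ z ≤ w := inf_le_left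
            _ ≤ b := hb (Finset.mem_coe.mpr this)
        · have : w ⊓ z = ⊥ := by
            by_contra hne
            exact hwz (le_factor_of_inf_ne_bot hG hsbot (z₀ := ⟨z, hzf⟩)
              (hSG w (Finset.mem_coe.mp hw)) (hs.1 hw) hne)
          rw [this]; exact bot_le
    -- case on the size of T
    rcases Nat.lt_or_ge T.card 2 with hTcard | hTcard
    · interval_cases h : T.card
      · -- T empty: z ≤ ⊥, contradiction
        have hTe : T = ∅ := Finset.card_eq_zero.mp h
        exfalso
        have : z ≤ ⊥ := hlubT.2 (by simp [hTe, upperBounds])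
        exact hG.1 ((le_bot_iff.1 this) ▸ hzf.1)
      · obtain ⟨w, hw⟩ := Finset.card_eq_one.mp h
        have : z = w := by
          have h1 : IsLUB ({w} : Set L) z := by
            rw [hw] at hlubT
            simpa using hlubT
          exact h1.unique isLUB_singleton
        rw [this]
        exact hTS (hw ▸ Finset.mem_singleton_self w)
    · exfalso
      have hTN : ↑T ⊆ N := fun a ha => hS (hTS (Finset.mem_coe.mp ha))
      have hTanti : ∀ a ∈ T, ∀ b ∈ T, a ≠ b → ¬ a ≤ b :=
        fun a ha b hb => hanti a (hTS ha) b (hTS hb)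
      obtain ⟨u, hu, huG⟩ := hN.2 T hTN hTcard hTanti
      exact huG ((hu.unique hlubT) ▸ hzf.1)
  -- conclude
  ext y
  constructor
  · intro hy
    exact Finset.mem_coe.mpr (hFS y hy)
  · intro hy
    have hyS : y ∈ S := Finset.mem_coe.mp hy
    obtain ⟨z, hzf, hyz⟩ := hex y hyS
    have hzS : z ∈ S := hFS z hzf
    have : y = z := by
      by_contra hne
      exact hanti y hyS z hzS hne hyz
    rw [this]
    exact hzf
end
end

section
/- Let N ∈ 𝒩 (a face of the complex of k-trees). Then the poset Σ(N) of all joins of subsets of N is a lattice: it has a top and bottom element, and for a, b ∈ Σ(N), the meet of a and b is given by the join of the antichain max(N_{≤a} ∩ N_{≤b}). -/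
open Classical Set
noncomputable section

/-- Membership in the family of faces of the complex of k-trees: `N ⊆ G` and every
antichain in `N` of size at least two has a unique minimal upper bound in `Pik k m`,
which moreover does not lie in `G`. -/
def memN (k m : ℕ) (N : Set (Setoid (Fin m))) : Prop :=
  N ⊆ BSG k m ∧ ∀ S : Finset (Setoid (Fin m)), ↑S ⊆ N → 2 ≤ S.card →
    (∀ a ∈ S, ∀ b ∈ S, a ≠ b → ¬ a ≤ b) →
    (∃! z, IsMinUB (Pik k m) ↑S z) ∧
      ∀ z, IsMinUB (Pik k m) ↑S z → z ∉ BSG k m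

/-- `Σ(N)`: the set of all (unique minimal-upper-bound) joins of subsets of `N` inside
`Pik k m`; the empty join yields the minimal element. -/
def SigmaSet (k m : ℕ) (N : Set (Setoid (Fin m))) : Set (Setoid (Fin m)) :=
  {a | ∃ X ⊆ N, IsMinUB (Pik k m) X a}


instance instFinSetoid (m : ℕ) : Finite (Setoid (Fin m)) :=
  Finite.of_injective (fun s => s.r)
    (fun a b h => Setoid.ext (fun x y => by rw [show a.r = b.r from h]))

lemma exists_max_above {α : Type*} [PartialOrder α] {S : Set α} {x : α} (hx : x ∈ S)
    (hfin : S.Finite) : ∃ y ∈ S, x ≤ y ∧ ∀ z ∈ S, y ≤ z → y = z := by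
  obtain ⟨y, hy'⟩ := (hfin.inter_of_left (Set.Ici x)).exists_maximal ⟨x, hx, le_refl x⟩
  have hy := hy'.1
  have hmax : ∀ z ∈ S ∩ Set.Ici x, y ≤ z → y = z := fun z hz hyz => le_antisymm hyz (hy'.2 hz hyz)
  exact ⟨y, hy.1, hy.2, fun z hz hyz => hmax z ⟨hz, le_trans hy.2 hyz⟩ hyz⟩

lemma exists_min_below {α : Type*} [PartialOrder α] {S : Set α} {x : α} (hx : x ∈ S)
    (hfin : S.Finite) : ∃ y ∈ S, y ≤ x ∧ ∀ z ∈ S, z ≤ y → z = y := by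
  obtain ⟨y, hy'⟩ := (hfin.inter_of_left (Set.Iic x)).exists_minimal ⟨x, hx, le_refl x⟩
  have hy := hy'.1
  have hmin : ∀ z ∈ S ∩ Set.Iic x, z ≤ y → y = z := fun z hz hyz => le_antisymm (hy'.2 hz hyz) hyz
  exact ⟨y, hy.1, hy.2, fun z hz hyz => (hmin z ⟨hz, le_trans hyz hy.2⟩ hyz).symm⟩

lemma blockSetoid_apply {m : ℕ} (B : Set (Fin m)) (x y : Fin m) :
    blockSetoid B x y ↔ (x = y ∨ (x ∈ B ∧ y ∈ B)) := Iff.rfl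

lemma bsg_subset_pik (k m : ℕ) : BSG k m ⊆ Pik k m := by
  rintro s ⟨B, hB2, hBk, rfl⟩ c ⟨y, rfl⟩
  by_cases hy : y ∈ B
  · have h : {x | blockSetoid B x y} = B := by
      ext x
      simp only [Set.mem_setOf_eq, blockSetoid_apply]
      constructor
      · rintro (rfl | h); exact hy; exact h.1
      · intro h; exact Or.inr ⟨h, hy⟩
    rw [h]; exact hBk
  · have h : {x | blockSetoid B x y} = {y} := by
      ext x
      simp only [Set.mem_setOf_eq, blockSetoid_apply, Set.mem_singleton_iff]
      constructor
      · rintro (rfl | h); rfl; exact absurd h.2 hy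
      · rintro rfl; exact Or.inl rfl
    rw [h, Set.ncard_singleton]

lemma bot_mem_pik (k m : ℕ) : (⊥ : Setoid (Fin m)) ∈ Pik k m := by
  rintro c ⟨y, rfl⟩
  have h : {x | (⊥ : Setoid (Fin m)) x y} = {y} := by
    ext x; simp [Setoid.bot_def]
  rw [h, Set.ncard_singleton]

lemma top_mem_pik (k m : ℕ) (hm : m ≡ 1 [MOD k]) : (⊤ : Setoid (Fin m)) ∈ Pik k m := by
  rintro c ⟨y, rfl⟩
  have h : {x | (⊤ : Setoid (Fin m)) x y} = Set.univ := by
    ext x; simp [Setoid.top_def]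
  rw [h, Set.ncard_univ, Nat.card_eq_fintype_card, Fintype.card_fin]
  exact hm

/-- Every subset of `N` has a least upper bound in `Pik k m`. -/
lemma join_least (k m : ℕ) (hm : m ≡ 1 [MOD k]) (N : Set (Setoid (Fin m))) (hN : memN k m N)
    (X : Set (Setoid (Fin m))) (hX : X ⊆ N) :
    ∃ z, IsMinUB (Pik k m) X z ∧ ∀ w ∈ Pik k m, (∀ a ∈ X, a ≤ w) → z ≤ w := by
  classical
  set M : Set (Setoid (Fin m)) := {g ∈ X | ∀ g' ∈ X, g ≤ g' → g = g'} with hMdef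
  have hMX : M ⊆ X := fun g hg => hg.1
  have hup : ∀ x ∈ X, ∃ g ∈ M, x ≤ g := by
    intro x hx
    obtain ⟨y, hy, hxy, hmax⟩ := exists_max_above hx (Set.toFinite X)
    exact ⟨y, ⟨hy, hmax⟩, hxy⟩
  -- it suffices to find a least `Pik`-upper bound of `M`
  suffices h : ∃ z ∈ Pik k m, (∀ a ∈ M, a ≤ z) ∧ ∀ w ∈ Pik k m, (∀ a ∈ M, a ≤ w) → z ≤ w by
    obtain ⟨z, hzP, hzUB, hzL⟩ := h
    have hUBX : ∀ w, (∀ a ∈ X, a ≤ w) → ∀ a ∈ M, a ≤ w := fun w hw a ha => hw a (hMX ha)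
    have hXUB : ∀ a ∈ X, a ≤ z := by
      intro x hx
      obtain ⟨g, hg, hxg⟩ := hup x hx
      exact le_trans hxg (hzUB g hg)
    refine ⟨z, ⟨hzP, hXUB, ?_⟩, fun w hw hUB => hzL w hw (hUBX w hUB)⟩
    intro w hwP hwUB hwz
    exact le_antisymm hwz (hzL w hwP (hUBX w hwUB))
  -- now case on the size of the antichain `M`
  have hMfin : M.Finite := Set.toFinite M
  by_cases h2 : ∃ g ∈ M, ∃ g' ∈ M, g ≠ g'
  · -- `M` is an antichain of size ≥ 2: use `memN`
    set F : Finset (Setoid (Fin m)) := hMfin.toFinset with hF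
    have hFM : (↑F : Set (Setoid (Fin m))) = M := hMfin.coe_toFinset
    obtain ⟨g, hg, g', hg', hgg'⟩ := h2
    have hcard : 2 ≤ F.card := by
      refine Finset.one_lt_card.mpr ⟨g, ?_, g', ?_, hgg'⟩ <;>
        simp only [hF, hMfin.mem_toFinset] <;> assumption
    have hanti : ∀ a ∈ F, ∀ b ∈ F, a ≠ b → ¬ a ≤ b := by
      intro a ha b hb hab hle
      rw [hF, hMfin.mem_toFinset] at ha hb
      exact hab (ha.2 b (hMX hb) hle)
    obtain ⟨⟨z, hz, huniq⟩, -⟩ := hN.2 F (by rw [hFM]; exact hMX.trans hX) hcard hanti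
    rw [hFM] at hz
    refine ⟨z, hz.1, hz.2.1, ?_⟩
    intro w hwP hwUB
    -- take a minimal `Pik`-upper bound of `M` below `w`; by uniqueness it is `z`
    set T : Set (Setoid (Fin m)) := {v | v ∈ Pik k m ∧ ∀ a ∈ M, a ≤ v} with hT
    have hwT : w ∈ T := ⟨hwP, hwUB⟩
    obtain ⟨v, hvT, hvw, hvmin⟩ := exists_min_below hwT (Set.toFinite T)
    have hv : IsMinUB (Pik k m) (↑F) v := by
      rw [hFM]
      exact ⟨hvT.1, hvT.2, fun u huP huUB huv => hvmin u ⟨huP, huUB⟩ huv⟩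
    have : v = z := huniq v hv
    rw [← this]; exact hvw
  · push_neg at h2
    rcases Set.eq_empty_or_nonempty M with hM | ⟨g, hg⟩
    · -- `M = ∅` forces `X = ∅`; the join is `⊥`
      have hXe : X = ∅ := by
        rw [Set.eq_empty_iff_forall_notMem]
        intro x hx
        obtain ⟨g, hg, -⟩ := hup x hx
        rw [hM] at hg; exact hg
      refine ⟨⊥, bot_mem_pik k m, ?_, fun w hw _ => bot_le⟩
      intro a ha; rw [hM] at ha; exact absurd ha (Set.notMem_empty a)
    · -- `M = {g}`: the join is `g` itself
      have hgP : g ∈ Pik k m := bsg_subset_pik k m (hN.1 (hX (hMX hg)))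
      refine ⟨g, hgP, ?_, fun w hw hUB => hUB g hg⟩
      intro a ha
      rw [h2 a ha g hg]

/-- For `N` a face of the complex of k-trees, `Σ(N)` is a lattice: it has
a bottom and a top element, and for `a, b ∈ Σ(N)` the meet of `a` and `b` is the (unique
minimal upper bound) join of the antichain of maximal elements of `N` lying below both. -/
theorem stmt8 (k m : ℕ) (hk : 1 ≤ k) (hm : m ≡ 1 [MOD k])
    (N : Set (Setoid (Fin m))) (hN : memN k m N) :
    ((⊥ : Setoid (Fin m)) ∈ SigmaSet k m N ∧ ∀ a ∈ SigmaSet k m N, ⊥ ≤ a) ∧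
    (∃ t ∈ SigmaSet k m N, ∀ a ∈ SigmaSet k m N, a ≤ t) ∧
    ∀ a ∈ SigmaSet k m N, ∀ b ∈ SigmaSet k m N,
      ∃ c, IsMinUB (Pik k m)
          {z | z ∈ N ∧ z ≤ a ∧ z ≤ b ∧ ∀ w ∈ N, w ≤ a → w ≤ b → z ≤ w → z = w} c ∧
        c ∈ SigmaSet k m N ∧ c ≤ a ∧ c ≤ b ∧
        ∀ d ∈ SigmaSet k m N, d ≤ a → d ≤ b → d ≤ c := by
  -- every element of `Σ(N)` is the *least* `Pik`-upper bound of its generating set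
  have key : ∀ a ∈ SigmaSet k m N, ∃ X ⊆ N, IsMinUB (Pik k m) X a ∧
      ∀ w ∈ Pik k m, (∀ x ∈ X, x ≤ w) → a ≤ w := by
    rintro a ⟨X, hXN, ha⟩
    obtain ⟨z, hz, hleast⟩ := join_least k m hm N hN X hXN
    have hza : z ≤ a := hleast a ha.1 ha.2.1
    have hzea : z = a := ha.2.2 z hz.1 hz.2.1 hza
    exact ⟨X, hXN, ha, hzea ▸ hleast⟩
  refine ⟨⟨⟨∅, Set.empty_subset N, bot_mem_pik k m, ?_, ?_⟩, fun a _ => bot_le⟩, ?_, ?_⟩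
  · intro a ha; exact absurd ha (Set.notMem_empty a)
  · intro w _ _ hw; exact le_antisymm hw bot_le
  · -- top element: the join of all of `N`
    obtain ⟨t, ht, htleast⟩ := join_least k m hm N hN N (subset_refl N)
    refine ⟨t, ⟨N, subset_refl N, ht⟩, ?_⟩
    intro a ha
    obtain ⟨X, hXN, -, haleast⟩ := key a ha
    exact haleast t ht.1 (fun x hx => ht.2.1 x (hXN hx))
  · -- meets
    intro a ha b hb
    obtain ⟨Xa, hXaN, hia, -⟩ := key a ha
    obtain ⟨Xb, hXbN, hib, -⟩ := key b hb
    have haP : a ∈ Pik k m := hia.1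
    have hbP : b ∈ Pik k m := hib.1
    set Mset : Set (Setoid (Fin m)) :=
      {z | z ∈ N ∧ z ≤ a ∧ z ≤ b ∧ ∀ w ∈ N, w ≤ a → w ≤ b → z ≤ w → z = w} with hMset
    have hMsetN : Mset ⊆ N := fun z hz => hz.1
    obtain ⟨c, hc, hcleast⟩ := join_least k m hm N hN Mset hMsetN
    have hca : c ≤ a := hcleast a haP (fun z hz => hz.2.1)
    have hcb : c ≤ b := hcleast b hbP (fun z hz => hz.2.2.1)
    refine ⟨c, hc, ⟨Mset, hMsetN, hc⟩, hca, hcb, ?_⟩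
    intro d hd hda hdb
    obtain ⟨Xd, hXdN, hid, hdleast⟩ := key d hd
    refine hdleast c hc.1 ?_
    intro x hx
    have hxd : x ≤ d := hid.2.1 x hx
    have hxY : x ∈ {z | z ∈ N ∧ z ≤ a ∧ z ≤ b} := ⟨hXdN hx, le_trans hxd hda, le_trans hxd hdb⟩
    obtain ⟨y, hy, hxy, hymax⟩ := exists_max_above hxY (Set.toFinite _)
    have hyM : y ∈ Mset :=
      ⟨hy.1, hy.2.1, hy.2.2, fun w hw hwa hwb hyw => hymax w ⟨hw, hwa, hwb⟩ hyw⟩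
    exact le_trans hxy (hc.2.1 y hyM)
end
end

section
/- Let N ∈ 𝒩 and let Σ(N) be the lattice of joins of subsets of N. Then N is a building set of Σ(N): for every x ∈ Σ(N) with max N_{≤x} = {x₁,...,x_ℓ}, the map (a₁,...,a_ℓ) ↦ a₁ ∨ ... ∨ a_ℓ is a poset isomorphism from the product of intervals [0̂, x₁] × ... × [0̂, x_ℓ] in Σ(N) to the interval [0̂, x] in Σ(N). -/
open Classical Set
noncomputable section

-- experiments
variable {k m : ℕ} {B : Set (Fin m)}

lemma blockSetoid_iff {p q : Fin m} : blockSetoid B p q ↔ p = q ∨ (p ∈ B ∧ q ∈ B) := Iff.rfl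

instance : Finite (Setoid (Fin m)) := by
  have hinj : Function.Injective (fun s : Setoid (Fin m) => {p : Fin m × Fin m | s p.1 p.2}) := by
    intro s t h
    exact Setoid.ext fun a b => Set.ext_iff.1 h (a, b)
  exact Finite.of_injective _ hinj

lemma suppPart_blockSetoid (h2 : 2 ≤ B.ncard) : suppPart (blockSetoid B) = B := by
  ext p
  constructor
  · rintro ⟨q, hpq, (rfl | h)⟩
    · exact absurd rfl hpq
    · exact h.1
  · intro hp
    obtain ⟨q, hq, hqp⟩ := Set.exists_ne_of_one_lt_ncard (s := B) (by omega) p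
    exact ⟨q, fun h => hqp h.symm, Or.inr ⟨hp, hq⟩⟩

lemma suppPart_blockSetoid_subset : suppPart (blockSetoid B) ⊆ B := by
  rintro p ⟨q, hpq, (rfl | h)⟩
  · exact absurd rfl hpq
  · exact h.1

lemma suppPart_mono {s t : Setoid (Fin m)} (h : s ≤ t) : suppPart s ⊆ suppPart t := by
  rintro p ⟨q, hpq, hr⟩
  exact ⟨q, hpq, h hr⟩

lemma BSG_supp {a : Setoid (Fin m)} (ha : a ∈ BSG k m) :
    2 ≤ (suppPart a).ncard ∧ (suppPart a).ncard ≡ 1 [MOD k] ∧ a = blockSetoid (suppPart a) := by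
  obtain ⟨B, h2, h1, rfl⟩ := ha
  rw [suppPart_blockSetoid h2]
  exact ⟨h2, h1, rfl⟩

lemma BSG_rel_iff {a : Setoid (Fin m)} (ha : a ∈ BSG k m) {p q : Fin m} :
    a p q ↔ p = q ∨ (p ∈ suppPart a ∧ q ∈ suppPart a) := by
  conv_lhs => rw [(BSG_supp ha).2.2]
  exact Iff.rfl

lemma le_iff_supp {a z : Setoid (Fin m)} (ha : a ∈ BSG k m) (hz : z ∈ BSG k m) :
    a ≤ z ↔ suppPart a ⊆ suppPart z := by
  constructor
  · intro h
    exact suppPart_mono h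
  · intro h p q hpq
    rcases (BSG_rel_iff ha).1 hpq with rfl | ⟨hp, hq⟩
    · exact z.refl' p
    · exact (BSG_rel_iff hz).2 (Or.inr ⟨h hp, h hq⟩)

lemma blockSetoid_mem_Pik_s9 (h2 : 2 ≤ B.ncard) (h1 : B.ncard ≡ 1 [MOD k]) :
    blockSetoid B ∈ Pik k m := by
  rintro c ⟨y, rfl⟩
  by_cases hy : y ∈ B
  · have : {x | blockSetoid B x y} = B := by
      ext p
      constructor
      · rintro (rfl | h)
        · exact hy
        · exact h.1
      · exact fun hp => Or.inr ⟨hp, hy⟩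
    rw [this]; exact h1
  · have : {x | blockSetoid B x y} = {y} := by
      ext p
      constructor
      · rintro (rfl | h)
        · rfl
        · exact absurd h.2 hy
      · rintro rfl; exact Or.inl rfl
    rw [this, Set.ncard_singleton]

def Lam {m : ℕ} (N : Set (Setoid (Fin m))) : Prop :=
  ∀ a ∈ N, ∀ b ∈ N,
    suppPart a ⊆ suppPart b ∨ suppPart b ⊆ suppPart a ∨ Disjoint (suppPart a) (suppPart b)

lemma lam_of_memN {N : Set (Setoid (Fin m))} (hk : 1 ≤ k) (hN : memN k m N) : Lam N := by
  classical
  intro a ha b hb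
  by_contra hcon
  push_neg at hcon
  obtain ⟨hab, hba, hdis⟩ := hcon
  obtain ⟨x₀, hx₀a, hx₀b⟩ := Set.not_disjoint_iff.1 hdis
  set A := suppPart a with hA
  set B := suppPart b with hB
  obtain ⟨h2a, h1a, hrepa⟩ := BSG_supp (hN.1 ha)
  obtain ⟨h2b, h1b, hrepb⟩ := BSG_supp (hN.1 hb)
  have hne : a ≠ b := by
    rintro rfl; exact hab Set.Subset.rfl
  -- the antichain {a, b}
  have hanti : ∀ u ∈ ({a, b} : Finset (Setoid (Fin m))), ∀ v ∈ ({a, b} : Finset (Setoid (Fin m))),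
      u ≠ v → ¬ u ≤ v := by
    intro u hu v hv huv
    simp only [Finset.mem_insert, Finset.mem_singleton] at hu hv
    rcases hu with rfl | rfl <;> rcases hv with rfl | rfl
    · exact absurd rfl huv
    · intro h; exact hab ((le_iff_supp (hN.1 ha) (hN.1 hb)).1 h)
    · intro h; exact hba ((le_iff_supp (hN.1 hb) (hN.1 ha)).1 h)
    · exact absurd rfl huv
  have hsub : ↑({a, b} : Finset (Setoid (Fin m))) ⊆ N := by
    intro u hu
    simp only [Finset.coe_insert, Finset.coe_singleton, Set.mem_insert_iff,
      Set.mem_singleton_iff] at hu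
    rcases hu with rfl | rfl
    · exact ha
    · exact hb
  obtain ⟨⟨z, hz, _⟩, hnG⟩ := hN.2 {a, b} hsub (by rw [Finset.card_pair hne]) hanti
  -- membership in ↑{a,b}
  have hmemS : ∀ u : Setoid (Fin m), u ∈ (↑({a, b} : Finset (Setoid (Fin m))) : Set _) ↔
      u = a ∨ u = b := by
    intro u
    simp
  set U := A ∪ B with hU
  have hU2 : 2 ≤ U.ncard := le_trans h2a (Set.ncard_le_ncard Set.subset_union_left (Set.toFinite _))
  have hx₀U : x₀ ∈ U := Or.inl hx₀a
  -- any Pik upper bound has a class containing U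
  have hclass : ∀ w : Setoid (Fin m), w ∈ Pik k m → a ≤ w → b ≤ w →
      U ⊆ {p | w p x₀} ∧ ({p | w p x₀}).ncard ≡ 1 [MOD k] := by
    intro w hw haw hbw
    constructor
    · rintro p (hp | hp)
      · exact haw ((BSG_rel_iff (hN.1 ha)).2 (Or.inr ⟨hp, hx₀a⟩))
      · exact hbw ((BSG_rel_iff (hN.1 hb)).2 (Or.inr ⟨hp, hx₀b⟩))
    · exact hw _ (Setoid.mem_classes w x₀)
  -- the target cardinality t
  have hPex : ∃ n, U.ncard ≤ n ∧ n ≡ 1 [MOD k] := by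
    refine ⟨k * U.ncard + 1, ?_, Nat.mul_add_mod _ _ _⟩
    nlinarith
  obtain ⟨htU, ht1⟩ := Nat.find_spec hPex
  set t := Nat.find hPex with ht
  have ht2 : 2 ≤ t := le_trans hU2 htU
  have haz : a ≤ z := hz.2.1 a (by simp)
  have hbz : b ≤ z := hz.2.1 b (by simp)
  obtain ⟨hUC, hC1⟩ := hclass z hz.1 haz hbz
  have htm : t ≤ m := by
    have h1 : t ≤ ({p | z p x₀}).ncard :=
      Nat.find_min' hPex ⟨Set.ncard_le_ncard hUC (Set.toFinite _), hC1⟩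
    have h2 : ({p | z p x₀}).ncard ≤ m := by
      have := Set.ncard_le_ncard (Set.subset_univ {p | z p x₀}) (Set.toFinite _)
      simpa [Set.ncard_univ] using this
    omega
  obtain ⟨C₀, hUC₀, -, hC₀enc⟩ := Set.exists_superset_subset_encard_eq (k := (t : ℕ∞)) (Set.subset_univ U)
    (by rw [← (Set.toFinite U).cast_ncard_eq]; exact_mod_cast htU)
    (by rw [← (Set.toFinite (Set.univ : Set (Fin m))).cast_ncard_eq]
        simp only [Set.ncard_univ, Nat.card_eq_fintype_card, Fintype.card_fin]
        exact_mod_cast htm)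
  have hC₀card : C₀.ncard = t := by
    rw [Set.ncard_def, hC₀enc]; simp
  have hminC₀ : IsMinUB (Pik k m) (↑({a, b} : Finset (Setoid (Fin m)))) (blockSetoid C₀) := by
    refine ⟨blockSetoid_mem_Pik_s9 (hC₀card ▸ ht2) (hC₀card ▸ ht1), ?_, ?_⟩
    · intro u hu
      have hle : ∀ c ∈ N, suppPart c ⊆ U → c ≤ blockSetoid C₀ := by
        intro c hc hcU p q hpq
        rcases (BSG_rel_iff (hN.1 hc)).1 hpq with rfl | ⟨hp, hq⟩
        · exact Or.inl rfl
        · exact Or.inr ⟨hUC₀ (hcU hp), hUC₀ (hcU hq)⟩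
      rcases (hmemS u).1 hu with rfl | rfl
      · exact hle u ha Set.subset_union_left
      · exact hle u hb Set.subset_union_right
    · intro w hw hub hwle
      have haw := hub a (by simp)
      have hbw := hub b (by simp)
      obtain ⟨hUD, hD1⟩ := hclass w hw haw hbw
      have hDC₀ : {p | w p x₀} ⊆ C₀ := by
        intro p hp
        rcases hwle hp with rfl | h
        · exact hUC₀ hx₀U
        · exact h.1
      have htD : t ≤ ({p | w p x₀}).ncard :=
        Nat.find_min' hPex ⟨Set.ncard_le_ncard hUD (Set.toFinite _), hD1⟩
      have hDeq : {p | w p x₀} = C₀ :=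
        Set.eq_of_subset_of_ncard_le hDC₀ (by rw [hC₀card]; exact htD) (Set.toFinite _)
      apply Setoid.ext
      intro p q
      constructor
      · exact fun h => hwle h
      · rintro (rfl | ⟨hp, hq⟩)
        · exact w.refl' p
        · rw [← hDeq] at hp hq
          exact w.trans' hp (w.symm' hq)
  exact hnG _ hminC₀ ⟨C₀, hC₀card ▸ ht2, hC₀card ▸ ht1, rfl⟩

def jrel {m : ℕ} (X : Set (Setoid (Fin m))) (p q : Fin m) : Prop :=
  p = q ∨ ∃ a ∈ X, a p q

variable {N : Set (Setoid (Fin m))}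

lemma jrel_equiv (hG : N ⊆ BSG k m) (hlam : Lam N) {X : Set (Setoid (Fin m))} (hX : X ⊆ N) :
    Equivalence (jrel X) := by
  constructor
  · exact fun p => Or.inl rfl
  · rintro p q (rfl | ⟨a, ha, h⟩)
    · exact Or.inl rfl
    · exact Or.inr ⟨a, ha, a.symm' h⟩
  · rintro p q r (rfl | ⟨a, ha, h1⟩) h2
    · exact h2
    rcases h2 with rfl | ⟨b, hb, h2⟩
    · exact Or.inr ⟨a, ha, h1⟩
    rcases (BSG_rel_iff (hG (hX ha))).1 h1 with rfl | ⟨hpa, hqa⟩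
    · exact Or.inr ⟨b, hb, h2⟩
    rcases (BSG_rel_iff (hG (hX hb))).1 h2 with rfl | ⟨hqb, hrb⟩
    · exact Or.inr ⟨a, ha, h1⟩
    rcases hlam a (hX ha) b (hX hb) with hab | hba | hdis
    · exact Or.inr ⟨b, hb, (BSG_rel_iff (hG (hX hb))).2 (Or.inr ⟨hab hpa, hrb⟩)⟩
    · exact Or.inr ⟨a, ha, (BSG_rel_iff (hG (hX ha))).2 (Or.inr ⟨hpa, hba hrb⟩)⟩
    · exact absurd hdis (Set.not_disjoint_iff.2 ⟨q, hqa, hqb⟩)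

def joinSetoid (hG : N ⊆ BSG k m) (hlam : Lam N) {X : Set (Setoid (Fin m))} (hX : X ⊆ N) :
    Setoid (Fin m) :=
  ⟨jrel X, jrel_equiv hG hlam hX⟩

lemma joinSetoid_iff (hG : N ⊆ BSG k m) (hlam : Lam N) {X : Set (Setoid (Fin m))} (hX : X ⊆ N)
    {p q : Fin m} : joinSetoid hG hlam hX p q ↔ jrel X p q := Iff.rfl

lemma le_joinSetoid (hG : N ⊆ BSG k m) (hlam : Lam N) {X : Set (Setoid (Fin m))} (hX : X ⊆ N)
    {a : Setoid (Fin m)} (ha : a ∈ X) : a ≤ joinSetoid hG hlam hX :=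
  fun _ _ h => Or.inr ⟨a, ha, h⟩

lemma joinSetoid_le (hG : N ⊆ BSG k m) (hlam : Lam N) {X : Set (Setoid (Fin m))} (hX : X ⊆ N)
    {w : Setoid (Fin m)} (hw : ∀ a ∈ X, a ≤ w) : joinSetoid hG hlam hX ≤ w := by
  rintro p q (rfl | ⟨a, ha, h⟩)
  · exact w.refl' p
  · exact hw a ha h

lemma joinSetoid_mono (hG : N ⊆ BSG k m) (hlam : Lam N) {X Y : Set (Setoid (Fin m))}
    (hX : X ⊆ N) (hY : Y ⊆ N) (hXY : X ⊆ Y) :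
    joinSetoid hG hlam hX ≤ joinSetoid hG hlam hY := by
  rintro p q (rfl | ⟨a, ha, h⟩)
  · exact Or.inl rfl
  · exact Or.inr ⟨a, hXY ha, h⟩

lemma joinSetoid_isLUB (hG : N ⊆ BSG k m) (hlam : Lam N) {X : Set (Setoid (Fin m))}
    (hX : X ⊆ N) : IsLUB X (joinSetoid hG hlam hX) :=
  ⟨fun _ ha => le_joinSetoid hG hlam hX ha, fun _ hw => joinSetoid_le hG hlam hX fun _ ha => hw ha⟩

lemma joinSetoid_mem_Pik (hG : N ⊆ BSG k m) (hlam : Lam N) {X : Set (Setoid (Fin m))}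
    (hX : X ⊆ N) : joinSetoid hG hlam hX ∈ Pik k m := by
  rintro c ⟨y, rfl⟩
  by_cases hy : ∃ a ∈ X, y ∈ suppPart a
  · obtain ⟨M, hM, hMmax⟩ := Set.Finite.exists_maximalFor id
      {S | ∃ a ∈ X, suppPart a = S ∧ y ∈ S} (Set.toFinite _)
      (by obtain ⟨a, haX, hya⟩ := hy; exact ⟨suppPart a, a, haX, rfl, hya⟩)
    obtain ⟨a₀, ha₀X, ha₀M, hyM⟩ := hM
    have hceq : {p | (joinSetoid hG hlam hX) p y} = M := by
      ext p
      constructor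
      · rintro (rfl | ⟨a, haX', hrel⟩)
        · exact hyM
        rcases (BSG_rel_iff (hG (hX haX'))).1 hrel with rfl | ⟨hpa, hya'⟩
        · exact hyM
        rcases hlam a (hX haX') a₀ (hX ha₀X) with hsub | hsub | hdis
        · exact (ha₀M ▸ hsub) hpa
        · have : M = suppPart a := le_antisymm (ha₀M ▸ hsub) (hMmax ⟨a, haX', rfl, hya'⟩ (ha₀M ▸ hsub))
          rw [this]; exact hpa
        · exact absurd hdis (Set.not_disjoint_iff.2 ⟨y, hya', ha₀M ▸ hyM⟩)
      · intro hp
        exact Or.inr ⟨a₀, ha₀X, (BSG_rel_iff (hG (hX ha₀X))).2 (Or.inr ⟨ha₀M ▸ hp, ha₀M ▸ hyM⟩)⟩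
    rw [hceq, ← ha₀M]
    exact (BSG_supp (hG (hX ha₀X))).2.1
  · have hceq : {p | (joinSetoid hG hlam hX) p y} = {y} := by
      ext p
      constructor
      · rintro (rfl | ⟨a, haX', hrel⟩)
        · rfl
        rcases (BSG_rel_iff (hG (hX haX'))).1 hrel with rfl | ⟨hpa, hya'⟩
        · rfl
        · exact absurd ⟨a, haX', hya'⟩ hy
      · rintro rfl
        exact Or.inl rfl
    rw [hceq, Set.ncard_singleton]

lemma joinSetoid_isMinUB (hG : N ⊆ BSG k m) (hlam : Lam N) {X : Set (Setoid (Fin m))}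
    (hX : X ⊆ N) : IsMinUB (Pik k m) X (joinSetoid hG hlam hX) :=
  ⟨joinSetoid_mem_Pik hG hlam hX, fun _ ha => le_joinSetoid hG hlam hX ha,
    fun _ _ hub hle => le_antisymm hle (joinSetoid_le hG hlam hX hub)⟩

lemma mem_SigmaSet_iff (hG : N ⊆ BSG k m) (hlam : Lam N) {a : Setoid (Fin m)} :
    a ∈ SigmaSet k m N ↔ ∃ X, ∃ hX : X ⊆ N, a = joinSetoid hG hlam hX := by
  constructor
  · rintro ⟨X, hX, hmin⟩
    refine ⟨X, hX, ?_⟩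
    exact (hmin.2.2 _ (joinSetoid_mem_Pik hG hlam hX)
      (fun b hb => le_joinSetoid hG hlam hX hb)
      (joinSetoid_le hG hlam hX hmin.2.1)).symm
  · rintro ⟨X, hX, rfl⟩
    exact ⟨X, hX, joinSetoid_isMinUB hG hlam hX⟩

lemma mem_Sigma_of_mem (hG : N ⊆ BSG k m) (hlam : Lam N) {a : Setoid (Fin m)} (ha : a ∈ N) :
    a ∈ SigmaSet k m N := by
  refine (mem_SigmaSet_iff hG hlam).2 ⟨{a}, by simpa using ha, ?_⟩
  apply Setoid.ext
  intro p q
  constructor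
  · exact fun h => Or.inr ⟨a, rfl, h⟩
  · rintro (rfl | ⟨b, hb, h⟩)
    · exact a.refl' p
    · cases hb; exact h

lemma sSup_range_eq {ι' : Sort*} (hG : N ⊆ BSG k m) (hlam : Lam N)
    (Y : ι' → Set (Setoid (Fin m))) (hY : ∀ i, Y i ⊆ N)
    (g : ι' → Setoid (Fin m)) (hg : ∀ i, g i = joinSetoid hG hlam (hY i)) :
    sSup (Set.range g) = joinSetoid hG hlam (Set.iUnion_subset hY) := by
  apply IsLUB.sSup_eq
  constructor
  · rintro _ ⟨i, rfl⟩
    rw [hg i]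
    exact joinSetoid_mono hG hlam (hY i) (Set.iUnion_subset hY)
      (Set.subset_iUnion_of_subset i Set.Subset.rfl)
  · intro w hw
    apply joinSetoid_le
    intro a ha
    obtain ⟨i, hai⟩ := Set.mem_iUnion.1 ha
    calc a ≤ joinSetoid hG hlam (hY i) := le_joinSetoid hG hlam (hY i) hai
    _ = g i := (hg i).symm
    _ ≤ w := hw ⟨i, rfl⟩

lemma inf_eq (hG : N ⊆ BSG k m) (hlam : Lam N) {Y : Set (Setoid (Fin m))} (hY : Y ⊆ N)
    {x z : Setoid (Fin m)} (hz : z ∈ maxBelow N x) (hYx : ∀ a ∈ Y, a ≤ x) :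
    joinSetoid hG hlam hY ⊓ z =
      joinSetoid hG hlam (show {a ∈ Y | a ≤ z} ⊆ N from fun a ha => hY ha.1) := by
  obtain ⟨hzN, hzx, hzmax⟩ := hz
  apply le_antisymm
  · rintro p q ⟨h1, h2⟩
    rcases h1 with rfl | ⟨a, haY, ha⟩
    · exact Or.inl rfl
    rcases (BSG_rel_iff (hG (hY haY))).1 ha with rfl | ⟨hpa, hqa⟩
    · exact Or.inl rfl
    rcases (BSG_rel_iff (hG hzN)).1 h2 with rfl | ⟨hpz, hqz⟩
    · exact Or.inl rfl
    have haz : a ≤ z := by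
      rcases hlam a (hY haY) z hzN with hsub | hsub | hdis
      · exact (le_iff_supp (hG (hY haY)) (hG hzN)).2 hsub
      · exact le_of_eq (hzmax a (hY haY) (hYx a haY)
          ((le_iff_supp (hG hzN) (hG (hY haY))).2 hsub)).symm
      · exact absurd hdis (Set.not_disjoint_iff.2 ⟨p, hpa, hpz⟩)
    exact Or.inr ⟨a, ⟨haY, haz⟩, ha⟩
  · exact le_inf
      (joinSetoid_mono hG hlam _ hY (Set.sep_subset _ _))
      (joinSetoid_le hG hlam _ fun a ha => ha.2)

lemma exists_max_above_s9 {x a : Setoid (Fin m)} (ha : a ∈ N) (hax : a ≤ x) :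
    ∃ z ∈ maxBelow N x, a ≤ z := by
  obtain ⟨z, hz, hmax⟩ := Set.Finite.exists_maximalFor id {b ∈ N | a ≤ b ∧ b ≤ x}
    (Set.toFinite _) ⟨a, ha, le_rfl, hax⟩
  exact ⟨z, ⟨hz.1, hz.2.2, fun g' hg' hg'x hzg' =>
    le_antisymm hzg' (hmax ⟨hg', le_trans hz.2.1 hzg', hg'x⟩ hzg')⟩, hz.2.1⟩

lemma unique_max (hG : N ⊆ BSG k m) (hlam : Lam N) {x a z z' : Setoid (Fin m)} (ha : a ∈ N)
    (hz : z ∈ maxBelow N x) (hz' : z' ∈ maxBelow N x) (h1 : a ≤ z) (h2 : a ≤ z') : z = z' := by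
  rcases hlam z hz.1 z' hz'.1 with hsub | hsub | hdis
  · exact hz.2.2 z' hz'.1 hz'.2.1 ((le_iff_supp (hG hz.1) (hG hz'.1)).2 hsub)
  · exact (hz'.2.2 z hz.1 hz.2.1 ((le_iff_supp (hG hz'.1) (hG hz.1)).2 hsub)).symm
  · exfalso
    have h2a := (BSG_supp (hG ha)).1
    obtain ⟨p, hp⟩ : (suppPart a).Nonempty := Set.nonempty_of_ncard_ne_zero (by omega)
    exact Set.disjoint_left.1 hdis (suppPart_mono h1 hp) (suppPart_mono h2 hp)

lemma joinSetoid_congr (hG : N ⊆ BSG k m) (hlam : Lam N) {X X' : Set (Setoid (Fin m))}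
    (hX : X ⊆ N) (hX' : X' ⊆ N) (h : X = X') :
    joinSetoid hG hlam hX = joinSetoid hG hlam hX' := by subst h; rfl

/-- `N` is a building set of the lattice `Σ(N)`: for every `x ∈ Σ(N)`,
the join map is a poset isomorphism from the product of the intervals `[⊥, z]` over the
maximal elements `z` of `N` below `x` onto the interval `[⊥, x]` in `Σ(N)`. -/
theorem stmt9 (k m : ℕ) (hk : 1 ≤ k) (N : Set (Setoid (Fin m))) (hN : memN k m N)
    (hbot : (⊥ : Setoid (Fin m)) ∈ SigmaSet k m N) :
    ∀ x : SigmaSet k m N,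
      ∃ φ : ((z : {z : SigmaSet k m N // (z : Setoid (Fin m)) ∈ maxBelow N (x : Setoid (Fin m))}) →
              Set.Icc (⟨⊥, hbot⟩ : SigmaSet k m N) z.1) ≃o
            Set.Icc (⟨⊥, hbot⟩ : SigmaSet k m N) x,
        ∀ f, ((φ f).val : Setoid (Fin m)) =
          sSup (Set.range fun z => ((f z).val : Setoid (Fin m))) := by
  classical
  have hG : N ⊆ BSG k m := hN.1
  have hlam : Lam N := lam_of_memN hk hN
  intro x
  set ι := {z : SigmaSet k m N // (z : Setoid (Fin m)) ∈ maxBelow N (x : Setoid (Fin m))} with hι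
  set bot' : SigmaSet k m N := ⟨⊥, hbot⟩ with hbot'
  -- the join map
  have hFmem : ∀ f : (∀ z : ι, Set.Icc bot' z.1),
      sSup (Set.range fun z => ((f z).1 : Setoid (Fin m))) ∈ SigmaSet k m N := by
    intro f
    choose Y hY hrep using fun z : ι => (mem_SigmaSet_iff hG hlam).1 (f z).1.2
    rw [sSup_range_eq hG hlam Y hY _ hrep]
    exact (mem_SigmaSet_iff hG hlam).2 ⟨_, _, rfl⟩
  have hFle : ∀ f : (∀ z : ι, Set.Icc bot' z.1),
      sSup (Set.range fun z => ((f z).1 : Setoid (Fin m))) ≤ (x : Setoid (Fin m)) := by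
    intro f
    apply sSup_le
    rintro _ ⟨z, rfl⟩
    exact le_trans (show ((f z).1 : Setoid (Fin m)) ≤ (z.1 : Setoid (Fin m)) from (f z).2.2)
      z.2.2.1
  set F : (∀ z : ι, Set.Icc bot' z.1) → Set.Icc bot' x :=
    fun f => ⟨⟨sSup (Set.range fun z => ((f z).1 : Setoid (Fin m))), hFmem f⟩,
      ⟨by exact (bot_le : (⊥ : Setoid (Fin m)) ≤ _), hFle f⟩⟩ with hF
  -- the restriction map
  have hGmem : ∀ (y : Set.Icc bot' x) (z : ι),
      (y.1 : Setoid (Fin m)) ⊓ (z.1 : Setoid (Fin m)) ∈ SigmaSet k m N := by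
    intro y z
    obtain ⟨Y, hY, hyrep⟩ := (mem_SigmaSet_iff hG hlam).1 y.1.2
    have hYx : ∀ a ∈ Y, a ≤ (x : Setoid (Fin m)) := fun a ha =>
      le_trans (le_joinSetoid hG hlam hY ha) (hyrep ▸ (show (y.1 : Setoid (Fin m)) ≤ _ from y.2.2))
    rw [hyrep, inf_eq hG hlam hY z.2 hYx]
    exact (mem_SigmaSet_iff hG hlam).2 ⟨_, _, rfl⟩
  set G : Set.Icc bot' x → (∀ z : ι, Set.Icc bot' z.1) :=
    fun y z => ⟨⟨(y.1 : Setoid (Fin m)) ⊓ (z.1 : Setoid (Fin m)), hGmem y z⟩,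
      ⟨by exact (bot_le : (⊥ : Setoid (Fin m)) ≤ _), by exact (inf_le_right : (_ : Setoid (Fin m)) ⊓ _ ≤ _)⟩⟩ with hGdef
  -- left inverse
  have hGF : ∀ f, G (F f) = f := by
    intro f
    funext z
    apply Subtype.ext
    apply Subtype.ext
    show ((F f).1 : Setoid (Fin m)) ⊓ (z.1 : Setoid (Fin m)) = ((f z).1 : Setoid (Fin m))
    choose Y hY hrep using fun w : ι => (mem_SigmaSet_iff hG hlam).1 (f w).1.2
    have hFval : ((F f).1 : Setoid (Fin m)) = joinSetoid hG hlam (Set.iUnion_subset hY) :=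
      sSup_range_eq hG hlam Y hY _ hrep
    have hYx : ∀ a ∈ ⋃ w, Y w, a ≤ (x : Setoid (Fin m)) := by
      intro a ha
      obtain ⟨w, haw⟩ := Set.mem_iUnion.1 ha
      calc a ≤ joinSetoid hG hlam (hY w) := le_joinSetoid hG hlam (hY w) haw
      _ = ((f w).1 : Setoid (Fin m)) := (hrep w).symm
      _ ≤ (w.1 : Setoid (Fin m)) := (f w).2.2
      _ ≤ (x : Setoid (Fin m)) := w.2.2.1
    rw [hFval, inf_eq hG hlam (Set.iUnion_subset hY) z.2 hYx, hrep z]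
    apply joinSetoid_congr
    ext a
    constructor
    · rintro ⟨ha, halez⟩
      obtain ⟨w, haw⟩ := Set.mem_iUnion.1 ha
      have halew : a ≤ (w.1 : Setoid (Fin m)) := by
        calc a ≤ joinSetoid hG hlam (hY w) := le_joinSetoid hG hlam (hY w) haw
        _ = ((f w).1 : Setoid (Fin m)) := (hrep w).symm
        _ ≤ (w.1 : Setoid (Fin m)) := (f w).2.2
      have : (w.1 : Setoid (Fin m)) = (z.1 : Setoid (Fin m)) :=
        unique_max hG hlam (hY w haw) w.2 z.2 halew halez
      have hwz : w = z := Subtype.ext (Subtype.ext this)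
      rwa [← hwz]
    · intro ha
      refine ⟨Set.mem_iUnion.2 ⟨z, ha⟩, ?_⟩
      calc a ≤ joinSetoid hG hlam (hY z) := le_joinSetoid hG hlam (hY z) ha
      _ = ((f z).1 : Setoid (Fin m)) := (hrep z).symm
      _ ≤ (z.1 : Setoid (Fin m)) := (f z).2.2
  -- right inverse
  have hFG : ∀ y, F (G y) = y := by
    intro y
    apply Subtype.ext
    apply Subtype.ext
    show sSup (Set.range fun z => ((G y z).1 : Setoid (Fin m))) = (y.1 : Setoid (Fin m))
    obtain ⟨Y, hY, hyrep⟩ := (mem_SigmaSet_iff hG hlam).1 y.1.2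
    have hYx : ∀ a ∈ Y, a ≤ (x : Setoid (Fin m)) := fun a ha =>
      le_trans (le_joinSetoid hG hlam hY ha) (hyrep ▸ (show (y.1 : Setoid (Fin m)) ≤ _ from y.2.2))
    have hGz : ∀ z : ι, ((G y z).1 : Setoid (Fin m)) =
        joinSetoid hG hlam (show {a ∈ Y | a ≤ (z.1 : Setoid (Fin m))} ⊆ N from
          fun a ha => hY ha.1) := by
      intro z
      show (y.1 : Setoid (Fin m)) ⊓ (z.1 : Setoid (Fin m)) = _
      rw [hyrep]
      exact inf_eq hG hlam hY z.2 hYx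
    rw [sSup_range_eq hG hlam _ (fun z => fun a ha => hY ha.1) _ hGz, hyrep]
    apply joinSetoid_congr
    ext a
    constructor
    · intro h'
      obtain ⟨z, ha⟩ := Set.mem_iUnion.1 h'
      exact ha.1
    · intro ha
      obtain ⟨z₀, hz₀, haz₀⟩ := exists_max_above_s9 (hY ha) (hYx a ha)
      have hz₀S : z₀ ∈ SigmaSet k m N := mem_Sigma_of_mem hG hlam hz₀.1
      exact Set.mem_iUnion.2 ⟨⟨⟨z₀, hz₀S⟩, hz₀⟩, ha, haz₀⟩
  -- monotonicity
  have hFmono : Monotone F := by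
    intro f g h
    simp only [hF, Subtype.mk_le_mk]
    change sSup (Set.range fun z => ((f z).1 : Setoid (Fin m))) ≤ sSup (Set.range fun z => ((g z).1 : Setoid (Fin m)))
    apply sSup_le
    rintro _ ⟨z, rfl⟩
    refine le_trans (show ((f z).1 : Setoid (Fin m)) ≤ ((g z).1 : Setoid (Fin m)) from h z) ?_
    exact le_sSup ⟨z, rfl⟩
  have hGmono : Monotone G := by
    intro y₁ y₂ h z
    simp only [hGdef, Subtype.mk_le_mk]
    exact inf_le_inf_right _ (show (y₁.1 : Setoid (Fin m)) ≤ (y₂.1 : Setoid (Fin m)) from h)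
  refine ⟨Equiv.toOrderIso ⟨F, G, hGF, hFG⟩ hFmono hGmono, fun f => ?_⟩
  show ((F f).1 : Setoid (Fin m)) = _
  simp only [hF]
  rfl
end
end

section
/- Let P, Q be finite simplicial complexes and φ : F(P) → F(Q) a poset map between their face posets. Suppose for every face q of Q, the restriction φ_q : φ⁻¹(F(Q)_{≤q}) → F(Q)_{≤q} is the carrier map of a subdivision of the simplex complex Q_q by the subcomplex of P with face poset φ⁻¹(F(Q)_{≤q}), and that the associated vertex maps f⁰_q can be chosen compatibly (agreeing on common vertices for q₁ ≤ q₂). Then φ is the carrier map of a subdivision of Q by P. -/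
open Classical Set
noncomputable section

/-- The geometric realization carried by a family `F` of (finite) vertex sets: points are
the nonnegative finitely-supported weightings summing to `1` whose support lies in `F`. -/
def geomF {V : Type*} (F : Set (Set V)) : Set (V → ℝ) :=
  {w | (∀ v, 0 ≤ w v) ∧ (Function.support w).Finite ∧ ∑ᶠ v, w v = 1 ∧
        Function.support w ∈ F}

/-- `F` is (the face family of) an abstract simplicial complex: faces are nonempty finite
sets, closed under passing to nonempty subsets. -/
def IsComplexF {V : Type*} (F : Set (Set V)) : Prop :=
  ∀ s ∈ F, s.Nonempty ∧ s.Finite ∧ ∀ t ⊆ s, t.Nonempty → t ∈ F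

/-- The closed cell of a simplex `s`: all points supported on a nonempty subset of `s`. -/
def closedCell {V : Type*} (s : Set V) : Set (V → ℝ) :=
  geomF {t | t ⊆ s ∧ t.Nonempty}

/-- The open cell of a simplex `s`: all points supported on exactly `s`. -/
def openCell {V : Type*} (s : Set V) : Set (V → ℝ) :=
  geomF {s}

/-- The linear extension of a vertex map `f0 : V → |Q|` to the realization. -/
def linExt {V W : Type*} (f0 : V → W → ℝ) (w : V → ℝ) : W → ℝ :=
  fun u => ∑ᶠ v, w v * f0 v u

/-- `P` is a subdivision of `Q` with carrier map `φ` and vertex map `f0`: `φ` is a poset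
map of face posets, each vertex of a face `p` is sent into the closed cell of `φ p`, and
the linear extension of `f0` restricts to a homeomorphism of realizations. -/
def IsSubdivOn {V W : Type*} (P : Set (Set V)) (Q : Set (Set W))
    (φ : Set V → Set W) (f0 : V → W → ℝ) : Prop :=
  (∀ p ∈ P, φ p ∈ Q) ∧
  (∀ p ∈ P, ∀ p' ∈ P, p' ⊆ p → φ p' ⊆ φ p) ∧
  (∀ p ∈ P, ∀ v ∈ p, f0 v ∈ closedCell (φ p)) ∧
  ∃ h : (geomF P) ≃ₜ (geomF Q), ∀ w : geomF P, (h w : W → ℝ) = linExt f0 (w : V → ℝ)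

theorem linExt_congr {V W : Type*} {f g : V → W → ℝ} {w : V → ℝ}
    (h : ∀ v ∈ Function.support w, f v = g v) : linExt f w = linExt g w := by
  funext u
  refine finsum_congr fun v => ?_
  by_cases hv : v ∈ Function.support w
  · rw [h v hv]
  · simp [Function.notMem_support.mp hv]

theorem continuous_linExt {V W : Type*} [Fintype V] (f : V → W → ℝ) :
    Continuous (linExt f) := by
  refine continuous_pi fun u => ?_
  have : (fun w : V → ℝ => linExt f w u) = fun w => ∑ v, w v * f v u := by
    funext w; exact finsum_eq_sum_of_fintype _
  rw [this]
  exact continuous_finset_sum _ fun v _ => (continuous_apply v).mul continuous_const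

theorem mem_closedCell_iff {V : Type*} [Fintype V] {p : Set V} {w : V → ℝ} :
    w ∈ closedCell p ↔ (∀ v, 0 ≤ w v) ∧ (∑ v, w v = 1) ∧ ∀ v ∉ p, w v = 0 := by
  constructor
  · rintro ⟨h1, h2, h3, h4, h5⟩
    refine ⟨h1, by rw [← finsum_eq_sum_of_fintype]; exact h3, fun v hv => ?_⟩
    by_contra hw
    exact hv (h4 hw)
  · rintro ⟨h1, h2, h3⟩
    have hsum : ∑ᶠ v, w v = 1 := by rw [finsum_eq_sum_of_fintype]; exact h2
    have hsupp : Function.support w ⊆ p := fun v hv => by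
      by_contra hvp; exact hv (h3 v hvp)
    have hne : (Function.support w).Nonempty := by
      rcases Set.eq_empty_or_nonempty (Function.support w) with h | h
      · exfalso
        have : w = 0 := Function.support_eq_empty_iff.mp h
        rw [this] at hsum
        simp at hsum
      · exact h
    exact ⟨h1, (Function.support w).toFinite, hsum, hsupp, hne⟩

theorem isCompact_closedCell {V : Type*} [Fintype V] (p : Set V) :
    IsCompact (closedCell (V := V) p) := by
  have hsub : closedCell p ⊆ Set.pi Set.univ (fun _ : V => Set.Icc (0:ℝ) 1) := by
    intro w hw
    rw [mem_closedCell_iff] at hw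
    intro v _
    refine ⟨hw.1 v, ?_⟩
    calc w v ≤ ∑ u, w u := Finset.single_le_sum (fun u _ => hw.1 u) (Finset.mem_univ v)
    _ = 1 := hw.2.1
  have hclosed : IsClosed (closedCell (V := V) p) := by
    have : closedCell (V := V) p =
        {w | ∀ v, 0 ≤ w v} ∩ ({w | ∑ v, w v = 1} ∩ {w | ∀ v ∉ p, w v = 0}) := by
      ext w; rw [mem_closedCell_iff]; simp [Set.mem_inter_iff, and_assoc]
    rw [this]
    refine IsClosed.inter ?_ (IsClosed.inter ?_ ?_)
    · have : {w : V → ℝ | ∀ v, 0 ≤ w v} = ⋂ v, {w | 0 ≤ w v} := by ext; simp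
      rw [this]
      exact isClosed_iInter fun v => isClosed_le continuous_const (continuous_apply v)
    · exact isClosed_eq (continuous_finset_sum _ fun v _ => continuous_apply v) continuous_const
    · have : {w : V → ℝ | ∀ v ∉ p, w v = 0} = ⋂ v, ⋂ (_ : v ∉ p), {w | w v = 0} := by
        ext; simp
      rw [this]
      exact isClosed_iInter fun v => isClosed_iInter fun _ =>
        isClosed_eq (continuous_apply v) continuous_const
  exact ((isCompact_univ_pi fun _ => isCompact_Icc).of_isClosed_subset hclosed hsub)

theorem isCompact_geomF {V : Type*} [Fintype V] {P : Set (Set V)} (hP : IsComplexF P) :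
    IsCompact (geomF P) := by
  have key : geomF P = ⋃ p ∈ P, closedCell p := by
    ext w
    constructor
    · rintro ⟨h1, h2, h3, h4⟩
      refine Set.mem_biUnion h4 ?_
      exact ⟨h1, h2, h3, subset_rfl, (hP _ h4).1⟩
    · rintro ⟨s, ⟨p, rfl⟩, hs⟩
      simp only [Set.mem_iUnion] at hs
      obtain ⟨hp, h1, h2, h3, h4, h5⟩ := hs
      exact ⟨h1, h2, h3, (hP p hp).2.2 _ h4 h5⟩
  rw [key]
  exact (Set.toFinite P).isCompact_biUnion fun p _ => isCompact_closedCell p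


/-- If, for each face `q` of `Q`, the restriction of the poset map `φ`
over the subcomplex below `q` is the carrier map of a subdivision of the simplex on `q`
(with vertex maps chosen compatibly: agreeing on common vertices for nested faces), then
`φ` is the carrier map of a subdivision of `Q` by `P`. -/
theorem stmt13 {V W : Type*} [Finite V] [Finite W]
    (P : Set (Set V)) (Q : Set (Set W)) (hP : IsComplexF P) (hQ : IsComplexF Q)
    (φ : Set V → Set W)
    (hφ : ∀ p ∈ P, φ p ∈ Q)
    (hmono : ∀ p ∈ P, ∀ p' ∈ P, p' ⊆ p → φ p' ⊆ φ p)
    (f : Set W → V → W → ℝ)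
    (hsub : ∀ q ∈ Q, IsSubdivOn {p ∈ P | φ p ⊆ q} {t | t ⊆ q ∧ t.Nonempty} φ (f q))
    (hcompat : ∀ q₁ ∈ Q, ∀ q₂ ∈ Q, q₁ ⊆ q₂ →
      ∀ v : V, (∃ p ∈ P, v ∈ p ∧ φ p ⊆ q₁) → f q₁ v = f q₂ v) :
    ∃ f0 : V → W → ℝ, IsSubdivOn P Q φ f0 := by
  have _instV := Fintype.ofFinite V
  classical
  -- the global vertex map
  set f0 : V → W → ℝ := fun v => if h : {v} ∈ P then f (φ {v}) v else 0 with hf0def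
  -- f0 agrees with each local vertex map on relevant vertices
  have hf0 : ∀ p ∈ P, ∀ v ∈ p, ∀ q ∈ Q, φ p ⊆ q → f0 v = f q v := by
    intro p hp v hv q hq hpq
    have hvP : {v} ∈ P := (hP p hp).2.2 {v} (Set.singleton_subset_iff.mpr hv) ⟨v, rfl⟩
    have hφv : φ {v} ⊆ q := (hmono p hp {v} hvP (Set.singleton_subset_iff.mpr hv)).trans hpq
    have : f0 v = f (φ {v}) v := by simp [hf0def, hvP]
    rw [this]
    exact hcompat (φ {v}) (hφ _ hvP) q hq hφv v ⟨{v}, hvP, rfl, subset_rfl⟩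
  -- linExt f0 agrees with linExt (f q) on the subcomplex below q
  have hlin : ∀ q ∈ Q, ∀ w ∈ geomF {p ∈ P | φ p ⊆ q}, linExt f0 w = linExt (f q) w := by
    intro q hq w hw
    obtain ⟨-, -, -, hsupp⟩ := hw
    exact linExt_congr fun v hv => hf0 _ hsupp.1 v hv q hq hsupp.2
  -- local injectivity / image / surjectivity from the local homeomorphisms
  have himg : ∀ q ∈ Q, ∀ w ∈ geomF {p ∈ P | φ p ⊆ q},
      linExt f0 w ∈ geomF {t | t ⊆ q ∧ t.Nonempty} := by
    intro q hq w hw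
    obtain ⟨-, -, -, h, hh⟩ := hsub q hq
    have := (h ⟨w, hw⟩).2
    rwa [hh ⟨w, hw⟩, ← hlin q hq w hw] at this
  have hinjq : ∀ q ∈ Q, ∀ w₁, ∀ h1 : w₁ ∈ geomF {p ∈ P | φ p ⊆ q},
      ∀ w₂, ∀ h2 : w₂ ∈ geomF {p ∈ P | φ p ⊆ q},
      linExt f0 w₁ = linExt f0 w₂ → w₁ = w₂ := by
    intro q hq w₁ h1 w₂ h2 heq
    obtain ⟨-, -, -, h, hh⟩ := hsub q hq
    have e : h ⟨w₁, h1⟩ = h ⟨w₂, h2⟩ := by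
      apply Subtype.ext
      rw [hh ⟨w₁, h1⟩, hh ⟨w₂, h2⟩, ← hlin q hq w₁ h1, ← hlin q hq w₂ h2, heq]
    have := h.injective e
    exact congrArg Subtype.val this
  have hsurjq : ∀ q ∈ Q, ∀ y ∈ geomF {t | t ⊆ q ∧ t.Nonempty},
      ∃ w ∈ geomF {p ∈ P | φ p ⊆ q}, linExt f0 w = y := by
    intro q hq y hy
    obtain ⟨-, -, -, h, hh⟩ := hsub q hq
    obtain ⟨w, hw⟩ := h.surjective ⟨y, hy⟩
    refine ⟨w, w.2, ?_⟩
    rw [hlin q hq w w.2, ← hh w, hw]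
  -- every point of |P| lies in the subcomplex below φ of its support
  have hwq : ∀ w ∈ geomF P, w ∈ geomF {p ∈ P | φ p ⊆ φ (Function.support w)} := by
    rintro w ⟨h1, h2, h3, h4⟩
    exact ⟨h1, h2, h3, h4, subset_rfl⟩
  -- global image
  have hGmem : ∀ w ∈ geomF P, linExt f0 w ∈ geomF Q := by
    intro w hw
    have hq : φ (Function.support w) ∈ Q := hφ _ hw.2.2.2
    obtain ⟨h1, h2, h3, h4⟩ := himg _ hq w (hwq w hw)
    exact ⟨h1, h2, h3, (hQ _ hq).2.2 _ h4.1 h4.2⟩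
  -- global injectivity
  have hinj : ∀ w₁ ∈ geomF P, ∀ w₂ ∈ geomF P,
      linExt f0 w₁ = linExt f0 w₂ → w₁ = w₂ := by
    intro w₁ hw₁ w₂ hw₂ heq
    set y := linExt f0 w₁ with hy
    have hq₁ : φ (Function.support w₁) ∈ Q := hφ _ hw₁.2.2.2
    have hq₂ : φ (Function.support w₂) ∈ Q := hφ _ hw₂.2.2.2
    have hm₁ := hwq w₁ hw₁
    have hm₂ := hwq w₂ hw₂
    have hy₁ : y ∈ geomF {t | t ⊆ φ (Function.support w₁) ∧ t.Nonempty} :=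
      himg _ hq₁ w₁ hm₁
    have hy₂ : y ∈ geomF {t | t ⊆ φ (Function.support w₂) ∧ t.Nonempty} := by
      rw [heq]; exact himg _ hq₂ w₂ hm₂
    set q₃ := Function.support y with hq₃def
    have hq₃s₁ : q₃ ⊆ φ (Function.support w₁) := hy₁.2.2.2.1
    have hq₃s₂ : q₃ ⊆ φ (Function.support w₂) := hy₂.2.2.2.1
    have hq₃ : q₃ ∈ Q := (hQ _ hq₁).2.2 q₃ hq₃s₁ hy₁.2.2.2.2
    have hy₃ : y ∈ geomF {t | t ⊆ q₃ ∧ t.Nonempty} :=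
      ⟨hy₁.1, hy₁.2.1, hy₁.2.2.1, subset_rfl, hy₁.2.2.2.2⟩
    obtain ⟨w', hw', hw'y⟩ := hsurjq q₃ hq₃ y hy₃
    have hw'₁ : w' ∈ geomF {p ∈ P | φ p ⊆ φ (Function.support w₁)} :=
      ⟨hw'.1, hw'.2.1, hw'.2.2.1, hw'.2.2.2.1, hw'.2.2.2.2.trans hq₃s₁⟩
    have hw'₂ : w' ∈ geomF {p ∈ P | φ p ⊆ φ (Function.support w₂)} :=
      ⟨hw'.1, hw'.2.1, hw'.2.2.1, hw'.2.2.2.1, hw'.2.2.2.2.trans hq₃s₂⟩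
    have e1 : w₁ = w' := hinjq _ hq₁ w₁ hm₁ w' hw'₁ (by rw [hw'y])
    have e2 : w₂ = w' := hinjq _ hq₂ w₂ hm₂ w' hw'₂ (by rw [hw'y, heq])
    rw [e1, e2]
  -- global surjectivity
  have hsurj : ∀ y ∈ geomF Q, ∃ w ∈ geomF P, linExt f0 w = y := by
    intro y hy
    have hq : Function.support y ∈ Q := hy.2.2.2
    have hy' : y ∈ geomF {t | t ⊆ Function.support y ∧ t.Nonempty} :=
      ⟨hy.1, hy.2.1, hy.2.2.1, subset_rfl, (hQ _ hq).1⟩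
    obtain ⟨w, hw, hwy⟩ := hsurjq _ hq y hy'
    exact ⟨w, ⟨hw.1, hw.2.1, hw.2.2.1, hw.2.2.2.1⟩, hwy⟩
  refine ⟨f0, hφ, hmono, ?_, ?_⟩
  · intro p hp v hv
    have h3 := (hsub (φ p) (hφ p hp)).2.2.1 p ⟨hp, subset_rfl⟩ v hv
    rw [hf0 p hp v hv (φ p) (hφ p hp) subset_rfl]
    exact h3
  · have hG : ∀ w : geomF P, linExt f0 (w : V → ℝ) ∈ geomF Q := fun w => hGmem w w.2
    let G : geomF P → geomF Q := fun w => ⟨linExt f0 w, hG w⟩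
    have hGbij : Function.Bijective G := by
      constructor
      · intro a b hab
        exact Subtype.ext (hinj a a.2 b b.2 (congrArg Subtype.val hab))
      · intro y
        obtain ⟨w, hw, hwy⟩ := hsurj y y.2
        exact ⟨⟨w, hw⟩, Subtype.ext hwy⟩
    have hcs : CompactSpace (geomF P) := isCompact_iff_compactSpace.mp (isCompact_geomF hP)
    have hGcont : Continuous (Equiv.ofBijective G hGbij) := by
      show Continuous G
      exact Continuous.subtype_mk ((continuous_linExt f0).comp continuous_subtype_val) _
    exact ⟨hGcont.homeoOfEquivCompactToT2, fun w => rfl⟩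
end
end
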